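/- arXiv:0908.3787 — 4 statements merged into one kernel-verified Lean document; each statement's English description precedes it below -/
import Mathlib

section
/- Fix C > 0 and Λ_1,…,Λ_n > 0. Define β(m) = Σ_{i: m_S > 0} m_i·log(m_i·C/(m_S·Λ_i)) for m ∈ ℝ≥0^n, where m_S = Σ_i m_i (with β(0) = 0). Then inf over m ∈ ℝ≥0^n of β(m) equals 0 if Σ_i Λ_i ≤ C, and equals −∞ otherwise. -/
/-- For `C > 0` and `Λ_i > 0`, with
`β(m) = Σ_i m_i·log(m_i·C/(m_S·Λ_i))` (`m_S = Σ_i m_i`, conventions `0·log 0 = 0`,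
`β(0) = 0`), the infimum of `β` over `m ∈ ℝ≥0^n` is `0` if `Σ_i Λ_i ≤ C` and `−∞`
otherwise. -/
theorem stmt10 (n : ℕ) (C : ℝ) (Λ : Fin n → ℝ) (hC : 0 < C) (hΛ : ∀ i, 0 < Λ i) :
    ((∑ i, Λ i) ≤ C →
      IsGLB
        ((fun m : Fin n → ℝ =>
            ∑ i, m i * Real.log (m i * C / ((∑ r, m r) * Λ i))) ''
          {m | ∀ i, 0 ≤ m i}) 0) ∧
    (¬ (∑ i, Λ i) ≤ C →
      ∀ B : ℝ, ∃ m : Fin n → ℝ, (∀ i, 0 ≤ m i) ∧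
        (∑ i, m i * Real.log (m i * C / ((∑ r, m r) * Λ i))) < B) := by
  constructor
  · intro hsum
    apply IsLeast.isGLB
    constructor
    · exact ⟨fun _ => 0, fun i => le_refl 0, by simp⟩
    · rintro x ⟨m, hm, rfl⟩
      simp only
      set S := ∑ r, m r with hS
      have hS0 : 0 ≤ S := Finset.sum_nonneg fun i _ => hm i
      have key : ∀ i : Fin n, m i - S * Λ i / C ≤ m i * Real.log (m i * C / (S * Λ i)) := by
        intro i
        rcases eq_or_lt_of_le (hm i) with h | h
        · have hΛi := hΛ i; have h0 : (0:ℝ) ≤ S * Λ i / C := by positivity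
          simp only [← h, zero_mul, zero_sub, zero_div, Real.log_zero, mul_zero]
          linarith
        · have hSp : 0 < S :=
            lt_of_lt_of_le h (Finset.single_le_sum (fun j _ => hm j) (Finset.mem_univ i))
          have hΛi := hΛ i
          have harg : 0 < m i * C / (S * Λ i) := by positivity
          have hlog := Real.log_le_sub_one_of_pos
            (show (0:ℝ) < (m i * C / (S * Λ i))⁻¹ by positivity)
          rw [Real.log_inv] at hlog
          have h2 : m i * (1 - (m i * C / (S * Λ i))⁻¹)
              ≤ m i * Real.log (m i * C / (S * Λ i)) := by nlinarith
          calc m i - S * Λ i / C = m i * (1 - (m i * C / (S * Λ i))⁻¹) := by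
                field_simp
            _ ≤ _ := h2
      have hsum2 : (∑ i, (m i - S * Λ i / C)) ≤ ∑ i, m i * Real.log (m i * C / (S * Λ i)) :=
        Finset.sum_le_sum fun i _ => key i
      have heq : ∑ i, (m i - S * Λ i / C) = S - S * (∑ i, Λ i) / C := by
        rw [Finset.sum_sub_distrib, ← hS]
        congr 1
        rw [← Finset.sum_div, ← Finset.mul_sum]
      rw [heq] at hsum2
      have hpos : 0 ≤ S - S * (∑ i, Λ i) / C := by
        have : S * (∑ i, Λ i) ≤ S * C := mul_le_mul_of_nonneg_left hsum hS0
        rw [sub_nonneg, div_le_iff₀ hC]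
        linarith
      linarith
  · intro hlt B
    push_neg at hlt
    have hS : 0 < ∑ i, Λ i := hC.trans hlt
    have hL : Real.log (C / (∑ i, Λ i)) < 0 :=
      Real.log_neg (by positivity) (by rwa [div_lt_one hS])
    have hSL : (∑ i, Λ i) * Real.log (C / (∑ i, Λ i)) < 0 := mul_neg_of_pos_of_neg hS hL
    set t : ℝ := max 1 (B / ((∑ i, Λ i) * Real.log (C / (∑ i, Λ i))) + 1) with ht
    have ht1 : (1:ℝ) ≤ t := le_max_left _ _
    have ht0 : (0:ℝ) < t := lt_of_lt_of_le one_pos ht1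
    refine ⟨fun i => t * Λ i, fun i => le_of_lt (by have := hΛ i; positivity), ?_⟩
    have hr : ∑ r, t * Λ r = t * ∑ i, Λ i := by rw [← Finset.mul_sum]
    have heq : ∀ i : Fin n, (t * Λ i) * C / ((∑ r, t * Λ r) * Λ i) = C / (∑ i, Λ i) := by
      intro i
      rw [hr]
      have hΛi := (hΛ i).ne'
      field_simp
    have hval : ∑ i, (t * Λ i) * Real.log ((t * Λ i) * C / ((∑ r, t * Λ r) * Λ i))
        = t * ((∑ i, Λ i) * Real.log (C / (∑ i, Λ i))) := by
      simp_rw [heq]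
      rw [← Finset.sum_mul, ← Finset.mul_sum, mul_assoc]
    rw [hval]
    have ht2 : B / ((∑ i, Λ i) * Real.log (C / (∑ i, Λ i))) < t :=
      lt_of_lt_of_le (lt_add_one _) (le_max_right _ _)
    exact (div_lt_iff_of_neg hSL).mp ht2
end

section
/- Fix C > 0 and Λ_1,…,Λ_n > 0 and define β(m) = Σ_i m_i·log(m_i·C/(m_S·Λ_i)) for m ∈ ℝ≥0^n with m_S = Σ_i m_i > 0, and β(0) = 0. Then β(m) = sup over φ ∈ ℝ^n satisfying Σ_i Λ_i·e^{φ_i} ≤ C of Σ_i m_i·φ_i. In particular, β is convex and lower semicontinuous on ℝ≥0^n. -/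
namespace Stmt11Aux

lemma key {n : ℕ} {C : ℝ} {Λ : Fin n → ℝ} (hC : 0 < C) (hΛ : ∀ i, 0 < Λ i)
    {m : Fin n → ℝ} (hm : ∀ i, 0 ≤ m i)
    {φ : Fin n → ℝ} (hφ : (∑ i, Λ i * Real.exp (φ i)) ≤ C) :
    ∑ i, m i * φ i ≤ ∑ i, m i * Real.log (m i * C / ((∑ r, m r) * Λ i)) := by
  set S := ∑ r, m r with hS
  have hS0 : 0 ≤ S := Finset.sum_nonneg fun i _ => hm i
  rcases hS0.eq_or_lt with h0 | hpos
  · have hz : ∀ i, m i = 0 := fun i =>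
      (Finset.sum_eq_zero_iff_of_nonneg (fun i _ => hm i)).mp h0.symm i (Finset.mem_univ i)
    simp [hz]
  · have term : ∀ i ∈ Finset.univ, m i * φ i - m i * Real.log (m i * C / (S * Λ i))
        ≤ Λ i * Real.exp (φ i) * S / C - m i := by
      intro i _
      have hΛi := hΛ i
      rcases (hm i).eq_or_lt with h0 | hmi
      · rw [← h0]
        simp
        positivity
      · have ha : 0 < m i * C / (S * Λ i) := by positivity
        have hlog : Real.log (Real.exp (φ i) / (m i * C / (S * Λ i)))
            ≤ Real.exp (φ i) / (m i * C / (S * Λ i)) - 1 :=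
          Real.log_le_sub_one_of_pos (by positivity)
        rw [Real.log_div (Real.exp_pos _).ne' ha.ne', Real.log_exp] at hlog
        have h2 : m i * (Real.exp (φ i) / (m i * C / (S * Λ i)) - 1)
            = Λ i * Real.exp (φ i) * S / C - m i := by
          field_simp
        nlinarith [hlog, hmi]
    have hsum := Finset.sum_le_sum term
    rw [Finset.sum_sub_distrib, Finset.sum_sub_distrib] at hsum
    have h3 : ∑ i, Λ i * Real.exp (φ i) * S / C ≤ S := by
      have he : ∑ i, Λ i * Real.exp (φ i) * S / C
          = (∑ i, Λ i * Real.exp (φ i)) * S / C := by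
        rw [← Finset.sum_div, ← Finset.sum_mul]
      rw [he, div_le_iff₀ hC]
      nlinarith
    linarith

lemma feasible {n : ℕ} {C : ℝ} {Λ : Fin n → ℝ} (hC : 0 < C) (hΛ : ∀ i, 0 < Λ i) :
    (∑ i, Λ i * Real.exp ((fun _ : Fin n => Real.log (C / ((∑ j, Λ j) + 1))) i)) ≤ C := by
  have hT : 0 ≤ ∑ j, Λ j := Finset.sum_nonneg fun j _ => (hΛ j).le
  have hpos : 0 < C / ((∑ j, Λ j) + 1) := by positivity
  simp only [Real.exp_log hpos]
  rw [← Finset.sum_mul]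
  rw [mul_div_assoc', div_le_iff₀ (by positivity)]
  nlinarith

lemma nonempty_S {n : ℕ} {C : ℝ} {Λ : Fin n → ℝ} (hC : 0 < C) (hΛ : ∀ i, 0 < Λ i)
    (m : Fin n → ℝ) :
    {x : ℝ | ∃ φ : Fin n → ℝ,
      (∑ i, Λ i * Real.exp (φ i)) ≤ C ∧ x = ∑ i, m i * φ i}.Nonempty :=
  ⟨_, _, feasible hC hΛ, rfl⟩

lemma bdd_S {n : ℕ} {C : ℝ} {Λ : Fin n → ℝ} (hC : 0 < C) (hΛ : ∀ i, 0 < Λ i)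
    {m : Fin n → ℝ} (hm : ∀ i, 0 ≤ m i) :
    BddAbove {x : ℝ | ∃ φ : Fin n → ℝ,
      (∑ i, Λ i * Real.exp (φ i)) ≤ C ∧ x = ∑ i, m i * φ i} := by
  refine ⟨∑ i, m i * Real.log (m i * C / ((∑ r, m r) * Λ i)), ?_⟩
  rintro x ⟨φ, hφ, rfl⟩
  exact key hC hΛ hm hφ


lemma sup_eq {n : ℕ} {C : ℝ} {Λ : Fin n → ℝ} (hC : 0 < C) (hΛ : ∀ i, 0 < Λ i)
    {m : Fin n → ℝ} (hm : ∀ i, 0 ≤ m i) :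
    (∑ i, m i * Real.log (m i * C / ((∑ r, m r) * Λ i))) =
      sSup {x : ℝ | ∃ φ : Fin n → ℝ,
        (∑ i, Λ i * Real.exp (φ i)) ≤ C ∧ x = ∑ i, m i * φ i} := by
  set S := ∑ r, m r with hSdef
  have hS0 : 0 ≤ S := Finset.sum_nonneg fun i _ => hm i
  refine le_antisymm ?_ (csSup_le (nonempty_S hC hΛ m) ?_)
  swap
  · rintro x ⟨φ, hφ, rfl⟩; exact key hC hΛ hm hφ
  rcases hS0.eq_or_lt with h0 | hpos
  · -- all m i = 0
    have hz : ∀ i, m i = 0 := fun i =>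
      (Finset.sum_eq_zero_iff_of_nonneg (fun i _ => hm i)).mp h0.symm i (Finset.mem_univ i)
    obtain ⟨x, hx⟩ := nonempty_S hC hΛ m (Λ := Λ)
    obtain ⟨φ, hφ, rfl⟩ := hx
    have h1 : (∑ i, m i * Real.log (m i * C / (S * Λ i))) = 0 := by simp [hz]
    have h2 : (∑ i, m i * φ i) = 0 := by simp [hz]
    rw [h1, ← h2]
    exact le_csSup (bdd_S hC hΛ hm) ⟨φ, hφ, rfl⟩
  · rw [Real.le_sSup_iff (bdd_S hC hΛ hm) (nonempty_S hC hΛ m)]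
    intro ε hε
    set t : ℝ := Real.exp (ε / (2 * S)) with htdef
    have ht0 : 0 < t := Real.exp_pos _
    have ht1 : t < 1 := by
      rw [htdef, Real.exp_lt_one_iff]
      exact div_neg_of_neg_of_pos hε (by positivity)
    set c : ℝ := C * (1 - t) / ((∑ j, Λ j) + 1) with hcdef
    have hT : 0 ≤ ∑ j, Λ j := Finset.sum_nonneg fun j _ => (hΛ j).le
    have hc0 : 0 < c := by
      apply div_pos (by nlinarith) (by positivity)
    set φ : Fin n → ℝ := fun i =>
      if m i = 0 then Real.log c else Real.log (m i * C / (S * Λ i) * t) with hφdef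
    refine ⟨∑ i, m i * φ i, ⟨φ, ?_, rfl⟩, ?_⟩
    · -- feasibility
      have term : ∀ i ∈ Finset.univ,
          Λ i * Real.exp (φ i) ≤ C * t * m i / S + Λ i * c := by
        intro i _
        have hΛi := hΛ i
        rcases eq_or_ne (m i) 0 with h0 | hne
        · have hφi : φ i = Real.log c := by simp [hφdef, h0]
          rw [hφi, Real.exp_log hc0, h0]
          simp
        · have hmi : 0 < m i := lt_of_le_of_ne (hm i) (Ne.symm hne)
          have ha : 0 < m i * C / (S * Λ i) * t := by positivity
          simp only [hφdef, if_neg hne, Real.exp_log ha]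
          have : Λ i * (m i * C / (S * Λ i) * t) = C * t * m i / S := by
            field_simp
          rw [this]
          nlinarith
      have hsum := Finset.sum_le_sum term
      have hre : ∑ i, (C * t * m i / S + Λ i * c) = C * t + (∑ j, Λ j) * c := by
        rw [Finset.sum_add_distrib, ← Finset.sum_mul]
        congr 1
        have : ∑ i, C * t * m i / S = C * t * (∑ i, m i) / S := by
          rw [← Finset.sum_div, ← Finset.mul_sum]
        rw [this, ← hSdef, mul_div_assoc, div_self hpos.ne', mul_one]
      rw [hre] at hsum
      have hΛc : (∑ j, Λ j) * c ≤ C * (1 - t) := by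
        rw [hcdef, mul_div_assoc', div_le_iff₀ (by positivity)]
        nlinarith
      calc ∑ i, Λ i * Real.exp (φ i) ≤ C * t + (∑ j, Λ j) * c := hsum
        _ ≤ C * t + C * (1 - t) := by linarith
        _ = C := by ring
    · -- value
      have term : ∀ i ∈ Finset.univ,
          m i * φ i = m i * Real.log (m i * C / (S * Λ i)) + m i * (ε / (2 * S)) := by
        intro i _
        rcases eq_or_ne (m i) 0 with h0 | hne
        · simp [h0]
        · have hΛi := hΛ i
          have hmi : 0 < m i := lt_of_le_of_ne (hm i) (Ne.symm hne)
          have ha : 0 < m i * C / (S * Λ i) := by positivity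
          simp only [hφdef, if_neg hne]
          rw [Real.log_mul ha.ne' ht0.ne', Real.log_exp, mul_add]
      rw [Finset.sum_congr rfl term, Finset.sum_add_distrib, ← Finset.sum_mul, ← hSdef]
      have : S * (ε / (2 * S)) = ε / 2 := by field_simp
      rw [this]
      linarith


end Stmt11Aux

/-- For `C > 0` and `Λ_i > 0`, the rate function
`β(m) = Σ_i m_i·log(m_i·C/(m_S·Λ_i))` (with `β(0) = 0`) equals, on `ℝ≥0^n`, the support
function `sup {Σ_i m_i·φ_i : Σ_i Λ_i·e^{φ_i} ≤ C}`; in particular `β` is convex and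
lower semicontinuous on `ℝ≥0^n`. -/
theorem stmt11 (n : ℕ) (C : ℝ) (Λ : Fin n → ℝ) (hC : 0 < C) (hΛ : ∀ i, 0 < Λ i) :
    (∀ m : Fin n → ℝ, (∀ i, 0 ≤ m i) →
      (∑ i, m i * Real.log (m i * C / ((∑ r, m r) * Λ i))) =
        sSup {x : ℝ | ∃ φ : Fin n → ℝ,
          (∑ i, Λ i * Real.exp (φ i)) ≤ C ∧ x = ∑ i, m i * φ i}) ∧
    ConvexOn ℝ {m : Fin n → ℝ | ∀ i, 0 ≤ m i}
      (fun m : Fin n → ℝ => ∑ i, m i * Real.log (m i * C / ((∑ r, m r) * Λ i))) ∧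
    LowerSemicontinuousOn
      (fun m : Fin n → ℝ => ∑ i, m i * Real.log (m i * C / ((∑ r, m r) * Λ i)))
      {m : Fin n → ℝ | ∀ i, 0 ≤ m i} := by
  refine ⟨fun m hm => Stmt11Aux.sup_eq hC hΛ hm, ⟨?_, ?_⟩, ?_⟩
  · -- convexity of the set
    intro a ha b hb p q hp hq hpq i
    exact add_nonneg (mul_nonneg hp (ha i)) (mul_nonneg hq (hb i))
  · -- convexity inequality
    intro a ha b hb p q hp hq hpq
    have hab : ∀ i, 0 ≤ (p • a + q • b) i := fun i =>
      add_nonneg (mul_nonneg hp (ha i)) (mul_nonneg hq (hb i))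
    simp only [smul_eq_mul]
    rw [Stmt11Aux.sup_eq hC hΛ hab]
    apply csSup_le (Stmt11Aux.nonempty_S hC hΛ _)
    rintro x ⟨φ, hφ, rfl⟩
    have hx : ∑ i, (p • a + q • b) i * φ i
        = p * ∑ i, a i * φ i + q * ∑ i, b i * φ i := by
      rw [Finset.mul_sum, Finset.mul_sum, ← Finset.sum_add_distrib]
      refine Finset.sum_congr rfl fun i _ => ?_
      simp only [Pi.add_apply, Pi.smul_apply, smul_eq_mul]
      ring
    rw [hx]
    exact add_le_add
      (mul_le_mul_of_nonneg_left (Stmt11Aux.key hC hΛ ha hφ) hp)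
      (mul_le_mul_of_nonneg_left (Stmt11Aux.key hC hΛ hb hφ) hq)
  · -- lower semicontinuity
    intro x hx y hy
    simp only at hy ⊢
    rw [Stmt11Aux.sup_eq hC hΛ hx] at hy
    obtain ⟨z, hzS, hz⟩ := exists_lt_of_lt_csSup (Stmt11Aux.nonempty_S hC hΛ x) hy
    obtain ⟨φ, hφ, rfl⟩ := hzS
    have hcont : Continuous fun m : Fin n → ℝ => ∑ i, m i * φ i :=
      continuous_finset_sum _ fun i _ => (continuous_apply i).mul continuous_const
    have hopen : IsOpen {m : Fin n → ℝ | y < ∑ i, m i * φ i} :=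
      isOpen_lt continuous_const hcont
    have hev : {m : Fin n → ℝ | y < ∑ i, m i * φ i} ∈ nhds x := hopen.mem_nhds hz
    filter_upwards [nhdsWithin_le_nhds hev, self_mem_nhdsWithin] with w hw hws
    exact lt_of_lt_of_le hw (Stmt11Aux.key hC hΛ hws hφ)
end

section
/- Fix C > 0, Λ_1,…,Λ_n > 0 with Σ_i Λ_i < C, and let P be the multi-class queue stationary distribution P(m) = (1 − Σ_i Λ_i/C)·multinomial(m_S; m)·Π_i (Λ_i/C)^{m_i}. For each m ∈ ℝ≥0^n and bounded sequences σ^{(c)} ∈ ℝ^n with c·m_i + σ_i^{(c)} ∈ ℤ≥0 for all i, lim_{c→∞} (1/c)·log P(M_i = c·m_i + σ_i^{(c)} for all i) = −β(m), where β(m) = Σ_{i: m_S > 0} m_i·log(m_i·C/(m_S·Λ_i)). -/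
open Filter Real

-- Stirling-type bound: |log n! - (n log n - n)| ≤ M + log (n+1)
lemma stirling_bound : ∃ M : ℝ, 0 ≤ M ∧ ∀ n : ℕ,
    |Real.log (Nat.factorial n) - ((n : ℝ) * Real.log n - n)| ≤ M + Real.log (n + 1) := by
  have hlim : Tendsto (Real.log ∘ Stirling.stirlingSeq ∘ Nat.succ) atTop (nhds (Real.log (Real.sqrt Real.pi))) := by
    have h1 : Tendsto (Stirling.stirlingSeq ∘ Nat.succ) atTop (nhds (Real.sqrt Real.pi)) :=
      Stirling.tendsto_stirlingSeq_sqrt_pi.comp (tendsto_add_atTop_nat 1)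
    have hpi : Real.sqrt Real.pi ≠ 0 := by positivity
    exact ((Real.continuousAt_log hpi).tendsto.comp h1)
  have hlb : ∀ j : ℕ, Real.log (Real.sqrt Real.pi) ≤ Real.log (Stirling.stirlingSeq (j + 1)) := by
    intro j
    exact Stirling.log_stirlingSeq'_antitone.le_of_tendsto hlim j
  have hub : ∀ j : ℕ, Real.log (Stirling.stirlingSeq (j + 1)) ≤ Real.log (Stirling.stirlingSeq 1) := by
    intro j
    have := Stirling.log_stirlingSeq'_antitone (Nat.zero_le j)
    simpa using this
  set M0 : ℝ := max |Real.log (Real.sqrt Real.pi)| |Real.log (Stirling.stirlingSeq 1)| with hM0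
  have hbdd : ∀ j : ℕ, |Real.log (Stirling.stirlingSeq (j + 1))| ≤ M0 := by
    intro j
    rw [abs_le]
    constructor
    · calc -M0 ≤ -|Real.log (Real.sqrt Real.pi)| := by
            exact neg_le_neg (le_max_left _ _)
        _ ≤ Real.log (Real.sqrt Real.pi) := neg_abs_le _
        _ ≤ _ := hlb j
    · exact le_trans (hub j) (le_trans (le_abs_self _) (le_max_right _ _))
  refine ⟨M0 + Real.log 2, by positivity, ?_⟩
  intro n
  rcases Nat.eq_zero_or_pos n with rfl | hn
  · simp
    positivity
  · obtain ⟨j, rfl⟩ := Nat.exists_eq_add_of_le hn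
    set N : ℕ := 1 + j with hN
    have hform := Stirling.log_stirlingSeq_formula N
    have hNpos : (0:ℝ) < N := by positivity
    have hNlog : (N:ℝ) * Real.log ((N:ℝ) / Real.exp 1) = (N:ℝ) * Real.log N - N := by
      rw [Real.log_div (ne_of_gt hNpos) (Real.exp_ne_zero 1), Real.log_exp]
      ring
    have hD : Real.log (Nat.factorial N) - ((N:ℝ) * Real.log N - N)
        = Real.log (Stirling.stirlingSeq N) + 1 / 2 * Real.log (2 * N) := by
      rw [← hNlog]
      linarith [hform]
    rw [hD]
    have h1 : |Real.log (Stirling.stirlingSeq N)| ≤ M0 := by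
      have : N = j + 1 := by omega
      rw [this]; exact hbdd j
    have hlog2N : (0:ℝ) ≤ Real.log (2 * N) := by
      apply Real.log_nonneg
      have : (1:ℝ) ≤ (N:ℝ) := by exact_mod_cast Nat.one_le_iff_ne_zero.mpr (by omega)
      linarith
    have h2 : 1 / 2 * Real.log (2 * N) ≤ Real.log 2 + Real.log (N + 1) := by
      have : Real.log (2 * N) = Real.log 2 + Real.log N := by
        rw [Real.log_mul (by norm_num) (ne_of_gt hNpos)]
      have hmono : Real.log (N:ℝ) ≤ Real.log ((N:ℝ) + 1) := by
        apply Real.log_le_log hNpos; linarith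
      have hl2 : (0:ℝ) ≤ Real.log 2 := Real.log_nonneg (by norm_num)
      nlinarith [hlog2N]
    calc |Real.log (Stirling.stirlingSeq N) + 1 / 2 * Real.log (2 * N)|
        ≤ |Real.log (Stirling.stirlingSeq N)| + |1 / 2 * Real.log (2 * N)| := abs_add_le _ _
      _ = |Real.log (Stirling.stirlingSeq N)| + 1 / 2 * Real.log (2 * N) := by
          rw [abs_of_nonneg (show (0:ℝ) ≤ 1 / 2 * Real.log (2 * N) by linarith)]
      _ ≤ M0 + (Real.log 2 + Real.log (N + 1)) := by linarith
      _ = M0 + Real.log 2 + Real.log (N + 1) := by ring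

-- Key asymptotic: (1/c)(log k_c! - k_c log c) → x log x - x  for k_c = c x + σ_c, σ bounded
lemma tendsto_log_factorial_aux (x : ℝ) (hx : 0 ≤ x) (B : ℝ) (σ : ℕ → ℝ)
    (hσ : ∀ c, |σ c| ≤ B) (k : ℕ → ℕ) (hk : ∀ c, (k c : ℝ) = (c : ℝ) * x + σ c) :
    Tendsto (fun c : ℕ => (1 / (c : ℝ)) * (Real.log (Nat.factorial (k c)) - (k c : ℝ) * Real.log c))
      atTop (nhds (x * Real.log x - x)) := by
  have hB : 0 ≤ B := le_trans (abs_nonneg _) (hσ 0)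
  obtain ⟨M, hM0, hM⟩ := stirling_bound
  -- part 1 : (1/c) * D (k c) → 0
  have hlogdiv : Tendsto (fun c : ℕ => Real.log c / (c : ℝ)) atTop (nhds 0) := by
    have := Real.isLittleO_log_id_atTop.tendsto_div_nhds_zero
    exact this.comp tendsto_natCast_atTop_atTop
  have hpart1 : Tendsto (fun c : ℕ =>
      (1 / (c : ℝ)) * (Real.log (Nat.factorial (k c)) - ((k c : ℝ) * Real.log (k c) - (k c : ℝ))))
      atTop (nhds 0) := by
    apply squeeze_zero_norm'
      (a := fun c : ℕ => (M + Real.log (x + B + 1)) / (c : ℝ) + Real.log c / (c : ℝ))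
    · filter_upwards [eventually_ge_atTop 1] with c hc
      have hc1 : (1 : ℝ) ≤ (c : ℝ) := by exact_mod_cast hc
      have hcpos : (0 : ℝ) < (c : ℝ) := by linarith
      have hkle : (k c : ℝ) + 1 ≤ (c : ℝ) * (x + B + 1) := by
        have := hσ c
        have h2 := hk c
        rw [abs_le] at this
        nlinarith
      have hlog : Real.log ((k c : ℝ) + 1) ≤ Real.log (x + B + 1) + Real.log c := by
        calc Real.log ((k c : ℝ) + 1) ≤ Real.log ((c : ℝ) * (x + B + 1)) := by
              apply Real.log_le_log (by positivity) hkle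
          _ = Real.log c + Real.log (x + B + 1) := by
              rw [Real.log_mul (ne_of_gt hcpos) (by positivity)]
          _ = _ := by ring
      have hD := hM (k c)
      have hD2 : |Real.log (Nat.factorial (k c)) - ((k c : ℝ) * Real.log (k c) - (k c : ℝ))|
          ≤ M + Real.log (x + B + 1) + Real.log c := by linarith
      calc ‖(1 / (c : ℝ)) * (Real.log (Nat.factorial (k c)) - ((k c : ℝ) * Real.log (k c) - (k c : ℝ)))‖
          = |Real.log (Nat.factorial (k c)) - ((k c : ℝ) * Real.log (k c) - (k c : ℝ))| / c := by
            rw [norm_mul, Real.norm_eq_abs, Real.norm_eq_abs,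
              abs_of_pos (show (0:ℝ) < 1 / (c:ℝ) by positivity)]
            ring
        _ ≤ (M + Real.log (x + B + 1) + Real.log c) / c := by gcongr
        _ = (M + Real.log (x + B + 1)) / (c : ℝ) + Real.log c / (c : ℝ) := by ring
    · have h1 : Tendsto (fun c : ℕ => (M + Real.log (x + B + 1)) / (c : ℝ)) atTop (nhds 0) := by
        simpa [div_eq_mul_inv] using tendsto_one_div_atTop_nhds_zero_nat.const_mul (M + Real.log (x + B + 1))
      simpa using h1.add hlogdiv
  -- part 2 : k c / c → x
  have hpart2 : Tendsto (fun c : ℕ => (k c : ℝ) / (c : ℝ)) atTop (nhds x) := by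
    have hσ0 : Tendsto (fun c : ℕ => σ c / (c : ℝ)) atTop (nhds 0) := by
      apply squeeze_zero_norm' (a := fun c : ℕ => B / (c : ℝ))
      · filter_upwards [eventually_ge_atTop 1] with c hc
        have hcpos : (0 : ℝ) < (c : ℝ) := by exact_mod_cast hc
        rw [norm_div, Real.norm_eq_abs, Real.norm_eq_abs, abs_of_pos hcpos]
        gcongr
        exact hσ c
      · simpa [div_eq_mul_inv] using tendsto_one_div_atTop_nhds_zero_nat.const_mul B
    have : Tendsto (fun c : ℕ => x + σ c / (c : ℝ)) atTop (nhds (x + 0)) :=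
      tendsto_const_nhds.add hσ0
    rw [add_zero] at this
    apply this.congr'
    filter_upwards [eventually_ge_atTop 1] with c hc
    have hcne : (c : ℝ) ≠ 0 := by positivity
    rw [hk c]; field_simp
  -- part 3 : (k c / c) * log (k c / c) → x * log x
  have hcont : Continuous (fun t : ℝ => t * Real.log t) := by
    have := Real.continuous_negMulLog
    have h2 : (fun t : ℝ => t * Real.log t) = fun t => -Real.negMulLog t := by
      funext t; simp [Real.negMulLog]
    rw [h2]; exact this.neg
  have hpart3 : Tendsto (fun c : ℕ => ((k c : ℝ) / c) * Real.log ((k c : ℝ) / c))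
      atTop (nhds (x * Real.log x)) :=
    (hcont.tendsto x).comp hpart2
  -- combine
  have hfinal : Tendsto (fun c : ℕ =>
      (1 / (c : ℝ)) * (Real.log (Nat.factorial (k c)) - ((k c : ℝ) * Real.log (k c) - (k c : ℝ)))
      + (((k c : ℝ) / c) * Real.log ((k c : ℝ) / c) - (k c : ℝ) / c))
      atTop (nhds (0 + (x * Real.log x - x))) :=
    hpart1.add (hpart3.sub hpart2)
  rw [zero_add] at hfinal
  apply hfinal.congr'
  filter_upwards [eventually_ge_atTop 1] with c hc
  have hcpos : (0 : ℝ) < (c : ℝ) := by exact_mod_cast hc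
  have hcne : (c : ℝ) ≠ 0 := ne_of_gt hcpos
  rcases Nat.eq_zero_or_pos (k c) with hkc | hkc
  · rw [hkc]; simp
  · have hkpos : (0 : ℝ) < (k c : ℝ) := by exact_mod_cast hkc
    have hlogdivlog : Real.log ((k c : ℝ) / c) = Real.log (k c) - Real.log c :=
      Real.log_div (ne_of_gt hkpos) hcne
    rw [hlogdivlog]
    field_simp
    ring

lemma final_eq (n : ℕ) (C : ℝ) (Λ : Fin n → ℝ) (hC : 0 < C) (hΛ : ∀ i, 0 < Λ i)
    (m : Fin n → ℝ) (hm : ∀ i, 0 ≤ m i) :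
    (∑ r, m r) * Real.log (∑ r, m r) - (∑ r, m r)
      - (∑ i, (m i * Real.log (m i) - m i)) + ∑ i, m i * Real.log (Λ i / C)
    = -(∑ i, m i * Real.log (m i * C / ((∑ r, m r) * Λ i))) := by
  set S : ℝ := ∑ r, m r with hS
  have hS0 : 0 ≤ S := Finset.sum_nonneg fun i _ => hm i
  have hmS : ∀ i, m i ≤ S := fun i =>
    Finset.single_le_sum (f := m) (fun j _ => hm j) (Finset.mem_univ i)
  have hSlog : S * Real.log S = ∑ i, m i * Real.log S := by
    rw [← Finset.sum_mul]
  trans (∑ i, (m i * Real.log S - (m i * Real.log (m i) - m i) + m i * Real.log (Λ i / C) - m i))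
  · rw [hSlog]
    simp only [Finset.sum_sub_distrib, Finset.sum_add_distrib]
    ring
  · rw [← Finset.sum_neg_distrib]
    apply Finset.sum_congr rfl
    intro i _
    rcases eq_or_lt_of_le (hm i) with h0 | h0
    · rw [← h0]; simp
    · have hSpos : 0 < S := lt_of_lt_of_le h0 (hmS i)
      rw [Real.log_div (ne_of_gt (mul_pos h0 hC)) (ne_of_gt (mul_pos hSpos (hΛ i))),
        Real.log_mul (ne_of_gt h0) (ne_of_gt hC),
        Real.log_mul (ne_of_gt hSpos) (ne_of_gt (hΛ i)),
        Real.log_div (ne_of_gt (hΛ i)) (ne_of_gt hC)]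
      ring

/-- Large deviations of the multi-class queue stationary distribution: for `m ∈ ℝ≥0^n`
and bounded `σ^{(c)}` with `c·m_i + σ_i^{(c)} ∈ ℤ≥0`,
`(1/c)·log P(M_i = c·m_i + σ_i^{(c)} ∀i) → −β(m)` where
`β(m) = Σ_i m_i·log(m_i·C/(m_S·Λ_i))`. -/
theorem stmt13 (n : ℕ) (C : ℝ) (Λ : Fin n → ℝ) (hC : 0 < C) (hΛ : ∀ i, 0 < Λ i)
    (hstab : (∑ i, Λ i) < C)
    (m : Fin n → ℝ) (hm : ∀ i, 0 ≤ m i)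
    (σ : ℕ → Fin n → ℝ) (hσ : ∃ B : ℝ, ∀ c i, |σ c i| ≤ B)
    (k : ℕ → Fin n → ℕ) (hk : ∀ c i, (k c i : ℝ) = (c : ℝ) * m i + σ c i) :
    Filter.Tendsto
      (fun c : ℕ => (1 / (c : ℝ)) *
        Real.log
          ((1 - ∑ i, Λ i / C) * (Nat.multinomial Finset.univ (k c) : ℝ) *
            ∏ i, (Λ i / C) ^ k c i))
      Filter.atTop
      (nhds (-(∑ i, m i * Real.log (m i * C / ((∑ r, m r) * Λ i))))) := by
  obtain ⟨B, hB⟩ := hσ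
  set A : ℝ := 1 - ∑ i, Λ i / C with hA
  have hApos : 0 < A := by
    rw [hA]
    have : (∑ i, Λ i / C) = (∑ i, Λ i) / C := by rw [Finset.sum_div]
    rw [this]
    rw [sub_pos, div_lt_one hC]
    exact hstab
  -- the total count
  set K : ℕ → ℕ := fun c => ∑ i, k c i with hK
  have hKval : ∀ c, (K c : ℝ) = (c : ℝ) * (∑ r, m r) + ∑ i, σ c i := by
    intro c
    rw [hK]
    push_cast
    rw [Finset.mul_sum, ← Finset.sum_add_distrib]
    exact Finset.sum_congr rfl fun i _ => hk c i
  have hKσ : ∀ c, |∑ i, σ c i| ≤ (n : ℝ) * B := by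
    intro c
    calc |∑ i, σ c i| ≤ ∑ i, |σ c i| := Finset.abs_sum_le_sum_abs _ _
      _ ≤ ∑ _i : Fin n, B := Finset.sum_le_sum fun i _ => hB c i
      _ = (n : ℝ) * B := by simp [mul_comm]
  -- limits
  have hlim0 : Tendsto (fun c : ℕ => (1 / (c : ℝ)) * Real.log A) atTop (nhds 0) := by
    simpa using tendsto_one_div_atTop_nhds_zero_nat.mul_const (Real.log A)
  have hlimK : Tendsto (fun c : ℕ => (1 / (c : ℝ)) * (Real.log (Nat.factorial (K c)) - (K c : ℝ) * Real.log c))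
      atTop (nhds ((∑ r, m r) * Real.log (∑ r, m r) - (∑ r, m r))) :=
    tendsto_log_factorial_aux (∑ r, m r) (Finset.sum_nonneg fun i _ => hm i)
      ((n : ℝ) * B) _ hKσ K hKval
  have hlimi : ∀ i : Fin n, Tendsto (fun c : ℕ =>
      (1 / (c : ℝ)) * (Real.log (Nat.factorial (k c i)) - (k c i : ℝ) * Real.log c))
      atTop (nhds (m i * Real.log (m i) - m i)) := fun i =>
    tendsto_log_factorial_aux (m i) (hm i) B (fun c => σ c i) (fun c => hB c i)
      (fun c => k c i) (fun c => hk c i)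
  have hlimratio : ∀ i : Fin n, Tendsto (fun c : ℕ => (k c i : ℝ) / (c : ℝ) * Real.log (Λ i / C))
      atTop (nhds (m i * Real.log (Λ i / C))) := by
    intro i
    apply Tendsto.mul_const
    have hσ0 : Tendsto (fun c : ℕ => σ c i / (c : ℝ)) atTop (nhds 0) := by
      apply squeeze_zero_norm' (a := fun c : ℕ => B / (c : ℝ))
      · filter_upwards [eventually_ge_atTop 1] with c hc
        have hcpos : (0 : ℝ) < (c : ℝ) := by exact_mod_cast hc
        rw [norm_div, Real.norm_eq_abs, Real.norm_eq_abs, abs_of_pos hcpos]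
        gcongr
        exact hB c i
      · simpa [div_eq_mul_inv] using tendsto_one_div_atTop_nhds_zero_nat.const_mul B
    have h2 : Tendsto (fun c : ℕ => m i + σ c i / (c : ℝ)) atTop (nhds (m i + 0)) :=
      tendsto_const_nhds.add hσ0
    rw [add_zero] at h2
    apply h2.congr'
    filter_upwards [eventually_ge_atTop 1] with c hc
    have hcne : (c : ℝ) ≠ 0 := by positivity
    rw [hk c i]; field_simp
  have hsum1 : Tendsto (fun c : ℕ => ∑ i, (1 / (c : ℝ)) *
      (Real.log (Nat.factorial (k c i)) - (k c i : ℝ) * Real.log c)) atTop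
      (nhds (∑ i, (m i * Real.log (m i) - m i))) :=
    tendsto_finset_sum _ fun i _ => hlimi i
  have hsum2 : Tendsto (fun c : ℕ => ∑ i, (k c i : ℝ) / (c : ℝ) * Real.log (Λ i / C)) atTop
      (nhds (∑ i, m i * Real.log (Λ i / C))) :=
    tendsto_finset_sum _ fun i _ => hlimratio i
  have htotal := ((hlim0.add hlimK).sub hsum1).add hsum2
  rw [zero_add] at htotal
  have hval : (∑ r, m r) * Real.log (∑ r, m r) - (∑ r, m r)
      - (∑ i, (m i * Real.log (m i) - m i)) + ∑ i, m i * Real.log (Λ i / C)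
      = -(∑ i, m i * Real.log (m i * C / ((∑ r, m r) * Λ i))) :=
    final_eq n C Λ hC hΛ m hm
  rw [hval] at htotal
  apply htotal.congr'
  filter_upwards [eventually_ge_atTop 1] with c hc
  have hcpos : (0 : ℝ) < (c : ℝ) := by exact_mod_cast hc
  have hcne : (c : ℝ) ≠ 0 := ne_of_gt hcpos
  -- positivity of factors
  have hmult : (0 : ℝ) < (Nat.multinomial Finset.univ (k c) : ℝ) := by
    exact_mod_cast Nat.multinomial_pos _ _
  have hprod : (0 : ℝ) < ∏ i, (Λ i / C) ^ k c i :=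
    Finset.prod_pos fun i _ => pow_pos (div_pos (hΛ i) hC) _
  -- expand log of product
  have hlogsplit : Real.log (A * (Nat.multinomial Finset.univ (k c) : ℝ) * ∏ i, (Λ i / C) ^ k c i)
      = Real.log A + Real.log (Nat.multinomial Finset.univ (k c) : ℝ)
        + ∑ i, (k c i : ℝ) * Real.log (Λ i / C) := by
    rw [Real.log_mul (by positivity) (ne_of_gt hprod),
      Real.log_mul (ne_of_gt hApos) (ne_of_gt hmult)]
    congr 1
    rw [Real.log_prod fun i _ => ne_of_gt (pow_pos (div_pos (hΛ i) hC) _)]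
    exact Finset.sum_congr rfl fun i _ => by rw [Real.log_pow]
  have hmultlog : Real.log (Nat.multinomial Finset.univ (k c) : ℝ)
      = Real.log (Nat.factorial (K c)) - ∑ i, Real.log (Nat.factorial (k c i)) := by
    have hspec : (∏ i, Nat.factorial (k c i)) * Nat.multinomial Finset.univ (k c)
        = Nat.factorial (K c) := Nat.multinomial_spec _ _
    have hcast : ((∏ i, Nat.factorial (k c i) : ℕ) : ℝ) * (Nat.multinomial Finset.univ (k c) : ℝ)
        = (Nat.factorial (K c) : ℝ) := by exact_mod_cast congrArg (Nat.cast : ℕ → ℝ) hspec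
    have hprodfact : (0 : ℝ) < ((∏ i, Nat.factorial (k c i) : ℕ) : ℝ) := by
      exact_mod_cast Finset.prod_pos fun i _ => Nat.factorial_pos _
    have := congrArg Real.log hcast
    rw [Real.log_mul (ne_of_gt hprodfact) (ne_of_gt hmult)] at this
    have hlp : Real.log ((∏ i, Nat.factorial (k c i) : ℕ) : ℝ) = ∑ i, Real.log (Nat.factorial (k c i)) := by
      push_cast
      rw [Real.log_prod fun i _ => ne_of_gt (by exact_mod_cast Nat.factorial_pos _)]
    rw [hlp] at this
    linarith
  have hKsum : (K c : ℝ) = ∑ i, (k c i : ℝ) := by rw [hK]; push_cast; ring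
  have e1 : ∑ i, (1 / (c:ℝ)) * (Real.log (Nat.factorial (k c i)) - (k c i : ℝ) * Real.log c)
      = (1 / (c:ℝ)) * (∑ i, Real.log (Nat.factorial (k c i)))
        - (1 / (c:ℝ)) * ((∑ i, (k c i : ℝ)) * Real.log c) := by
    rw [Finset.mul_sum, Finset.sum_mul, Finset.mul_sum, ← Finset.sum_sub_distrib]
    exact Finset.sum_congr rfl fun i _ => by ring
  have e2 : ∑ i, (k c i : ℝ) / (c:ℝ) * Real.log (Λ i / C)
      = (1 / (c:ℝ)) * ∑ i, (k c i : ℝ) * Real.log (Λ i / C) := by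
    rw [Finset.mul_sum]
    exact Finset.sum_congr rfl fun i _ => by ring
  rw [hlogsplit, hmultlog, e1, e2, hKsum]
  ring
end

section
/- In the setting of the primal-dual pair above, a pair (m*, m̄*) is optimal for the primal and Λ* is optimal for the dual if and only if: Σ_{j∈i} m*_{ji} = m̄*_i for all i; Σ_{i: j∈i} Λ*_i ≤ C_j for all j; m*_j·Λ*_i = m*_{ji}·C_j for all (j,i) ∈ 𝒦; and exp(G_i'(m̄*_i)) = Λ*_i for all i. -/
open Real Finset Set Filter


lemma aux_xlog {x y : ℝ} (hx : 0 ≤ x) (hy : 0 < y) :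
    x - y ≤ x * (Real.log x - Real.log y) := by
  rcases eq_or_lt_of_le hx with h | h
  · simp [← h]; linarith
  · have h1 : Real.log (y / x) ≤ y / x - 1 := Real.log_le_sub_one_of_pos (by positivity)
    rw [Real.log_div hy.ne' h.ne'] at h1
    have h2 := mul_le_mul_of_nonneg_left h1 h.le
    have h3 : x * (y / x) = y := by field_simp
    nlinarith

lemma aux_xlog_eq {x y : ℝ} (hx : 0 < x) (hy : 0 < y)
    (h : x * (Real.log x - Real.log y) ≤ x - y) : x = y := by
  by_contra hne
  have h1 : y / x ≠ 1 := by
    intro hc; exact hne (by field_simp at hc; linarith)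
  have h2 : Real.log (y / x) < y / x - 1 := Real.log_lt_sub_one_of_pos (by positivity) h1
  rw [Real.log_div hy.ne' hx.ne'] at h2
  have h3 := mul_lt_mul_of_pos_left h2 hx
  have h4 : x * (y / x) = y := by field_simp
  nlinarith

lemma grad_ineq {f : ℝ → ℝ} {x y : ℝ} (hf : ConcaveOn ℝ (Set.Ioi 0) f)
    (hx : (0:ℝ) < x) (hy : (0:ℝ) < y) (hd : DifferentiableAt ℝ f x) :
    f y ≤ f x + deriv f x * (y - x) := by
  rcases lt_trichotomy x y with h | h | h
  · have h1 := hf.slope_le_deriv hx hy h hd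
    rw [slope_def_field] at h1
    rw [div_le_iff₀ (by linarith)] at h1
    linarith
  · subst h; simp
  · have h1 := hf.deriv_le_slope hy hx h hd
    rw [slope_def_field] at h1
    rw [le_div_iff₀ (by linarith)] at h1
    nlinarith

lemma right_deriv_nonneg {f : ℝ → ℝ} {d : ℝ} (hd : HasDerivAt f d 0)
    (h : ∀ᶠ t in nhdsWithin 0 (Set.Ioi 0), f 0 ≤ f t) : 0 ≤ d := by
  have h2 := hasDerivAt_iff_tendsto_slope.mp hd
  have h3 : Tendsto (slope f 0) (nhdsWithin 0 (Set.Ioi 0)) (nhds d) :=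
    h2.mono_left (nhdsWithin_mono _ (fun x hx => ne_of_gt hx))
  refine ge_of_tendsto h3 ?_
  filter_upwards [h, self_mem_nhdsWithin] with t ht ht0
  rw [slope_def_field]
  have : (0:ℝ) < t - 0 := by simpa using (ht0 : (0:ℝ) < t)
  exact div_nonneg (by linarith) this.le

lemma relent_main (J n : ℕ) (route : Fin n → Finset (Fin J)) (C : Fin J → ℝ)
    (hC : ∀ j, 0 < C j)
    (m : Fin J → Fin n → ℝ) (hm : ∀ j i, 0 ≤ m j i)
    (hmz : ∀ j i, j ∉ route i → m j i = 0)
    (Λ : Fin n → ℝ) (hΛ : ∀ i, 0 < Λ i)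
    (hfeas : ∀ j, (∑ i ∈ Finset.univ.filter fun i => j ∈ route i, Λ i) ≤ C j) :
    (0 ≤ ∑ j, ∑ i, m j i * (Real.log (m j i * C j / ∑ r, m j r) - Real.log (Λ i))) ∧
    ((∑ j, ∑ i, m j i * (Real.log (m j i * C j / ∑ r, m j r) - Real.log (Λ i))) ≤ 0 →
      ∀ j i, j ∈ route i → m j i * C j = (∑ r, m j r) * Λ i) := by
  set M : Fin J → ℝ := fun j => ∑ r, m j r with hM
  have hMnn : ∀ j, 0 ≤ M j := fun j => Finset.sum_nonneg fun r _ => hm j r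
  -- if M j = 0 then each entry is 0
  have hMzero : ∀ j, M j = 0 → ∀ i, m j i = 0 := by
    intro j hj i
    have := (Finset.sum_eq_zero_iff_of_nonneg (fun r _ => hm j r)).mp hj
    exact this i (Finset.mem_univ i)
  set gap : Fin J → Fin n → ℝ := fun j i =>
    m j i * (Real.log (m j i * C j / M j) - Real.log (Λ i)) - m j i + M j * Λ i / C j
    with hgap
  set slack : Fin J → ℝ := fun j =>
    M j - (M j / C j) * ∑ i ∈ Finset.univ.filter (fun i => j ∈ route i), Λ i with hslack
  have hgapnn : ∀ j i, j ∈ route i → 0 ≤ gap j i := by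
    intro j i hji
    rcases eq_or_lt_of_le (hMnn j) with h0 | h0
    · have hz := hMzero j h0.symm i
      simp [hgap, hz, ← h0]
    · rcases eq_or_lt_of_le (hm j i) with hx0 | hx0
      · have : gap j i = M j * Λ i / C j := by simp [hgap, ← hx0]
        rw [this]
        exact div_nonneg (mul_nonneg (hMnn j) (hΛ i).le) (hC j).le
      · set x := m j i
        set y := M j * Λ i / C j with hy
        have hypos : 0 < y := div_pos (mul_pos h0 (hΛ i)) (hC j)
        have hlog : Real.log (x * C j / M j) - Real.log (Λ i) =
            Real.log x - Real.log y := by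
          rw [hy, Real.log_div (mul_pos hx0 (hC j)).ne' h0.ne',
            Real.log_mul hx0.ne' (hC j).ne',
            Real.log_div (mul_pos h0 (hΛ i)).ne' (hC j).ne',
            Real.log_mul h0.ne' (hΛ i).ne']
          ring
        have := aux_xlog hx0.le hypos
        simp only [hgap]
        rw [hlog]
        linarith
  have hslacknn : ∀ j, 0 ≤ slack j := by
    intro j
    have h1 := hfeas j
    have h2 : (M j / C j) * (∑ i ∈ Finset.univ.filter (fun i => j ∈ route i), Λ i)
        ≤ (M j / C j) * C j := by
      exact mul_le_mul_of_nonneg_left h1 (div_nonneg (hMnn j) (hC j).le)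
    have h3 : (M j / C j) * C j = M j := div_mul_cancel₀ (M j) (hC j).ne'
    simp only [hslack]
    linarith
  -- decomposition of inner sums
  have hdecomp : ∀ j, (∑ i, m j i * (Real.log (m j i * C j / M j) - Real.log (Λ i))) =
      (∑ i ∈ Finset.univ.filter (fun i => j ∈ route i), gap j i) + slack j := by
    intro j
    have hfil : ∀ (f : Fin n → ℝ),
        (∀ i, j ∉ route i → m j i * f i = 0) → True := fun _ _ => trivial
    have h1 : (∑ i, m j i * (Real.log (m j i * C j / M j) - Real.log (Λ i))) =
        ∑ i ∈ Finset.univ.filter (fun i => j ∈ route i),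
          m j i * (Real.log (m j i * C j / M j) - Real.log (Λ i)) := by
      symm
      apply Finset.sum_filter_of_ne
      intro i _ hne
      by_contra hc
      exact hne (by rw [hmz j i hc]; ring)
    have h2 : (∑ i ∈ Finset.univ.filter (fun i => j ∈ route i), m j i) = M j := by
      apply Finset.sum_filter_of_ne
      intro i _ hne
      by_contra hc
      exact hne (hmz j i hc)
    have h3 : (∑ i ∈ Finset.univ.filter (fun i => j ∈ route i), M j * Λ i / C j) =
        (M j / C j) * ∑ i ∈ Finset.univ.filter (fun i => j ∈ route i), Λ i := by
      rw [Finset.mul_sum]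
      apply Finset.sum_congr rfl
      intro i _; ring
    rw [h1]
    simp only [hgap, hslack]
    rw [Finset.sum_add_distrib, Finset.sum_sub_distrib, h2, h3]
    ring
  constructor
  · rw [show (∑ j, ∑ i, m j i * (Real.log (m j i * C j / ∑ r, m j r) - Real.log (Λ i)))
        = ∑ j, ((∑ i ∈ Finset.univ.filter (fun i => j ∈ route i), gap j i) + slack j) from
      Finset.sum_congr rfl (fun j _ => hdecomp j)]
    apply Finset.sum_nonneg
    intro j _
    have : (0:ℝ) ≤ ∑ i ∈ Finset.univ.filter (fun i => j ∈ route i), gap j i :=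
      Finset.sum_nonneg (fun i hi => hgapnn j i (Finset.mem_filter.mp hi).2)
    linarith [hslacknn j]
  · intro hle j i hji
    have htot : (∑ j, ((∑ i ∈ Finset.univ.filter (fun i => j ∈ route i), gap j i) + slack j)) ≤ 0 := by
      rw [← Finset.sum_congr rfl (fun j _ => hdecomp j)]
      exact hle
    have hterm_nn : ∀ j' ∈ Finset.univ (α := Fin J),
        0 ≤ (∑ i ∈ Finset.univ.filter (fun i => j' ∈ route i), gap j' i) + slack j' := by
      intro j' _
      have : (0:ℝ) ≤ ∑ i ∈ Finset.univ.filter (fun i => j' ∈ route i), gap j' i :=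
        Finset.sum_nonneg (fun i hi => hgapnn j' i (Finset.mem_filter.mp hi).2)
      linarith [hslacknn j']
    have htot0 : (∑ j, ((∑ i ∈ Finset.univ.filter (fun i => j ∈ route i), gap j i) + slack j)) = 0 :=
      le_antisymm htot (Finset.sum_nonneg hterm_nn)
    have hterm0 := (Finset.sum_eq_zero_iff_of_nonneg hterm_nn).mp htot0 j (Finset.mem_univ j)
    have hgapsum0 : (∑ i ∈ Finset.univ.filter (fun i => j ∈ route i), gap j i) = 0 := by
      have h1 : (0:ℝ) ≤ ∑ i ∈ Finset.univ.filter (fun i => j ∈ route i), gap j i :=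
        Finset.sum_nonneg (fun i hi => hgapnn j i (Finset.mem_filter.mp hi).2)
      linarith [hslacknn j]
    have hgap0 : gap j i = 0 := by
      exact (Finset.sum_eq_zero_iff_of_nonneg
        (fun i hi => hgapnn j i (Finset.mem_filter.mp hi).2)).mp
        hgapsum0 i (by simpa using hji)
    -- now extract conclusion
    rcases eq_or_lt_of_le (hMnn j) with h0 | h0
    · have hz := hMzero j h0.symm i
      have hsum0 : (∑ r : Fin n, m j r) = 0 := h0.symm
      rw [hz, hsum0]; ring
    · rcases eq_or_lt_of_le (hm j i) with hx0 | hx0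
      · exfalso
        have heq : gap j i = M j * Λ i / C j := by simp [hgap, ← hx0]
        rw [heq] at hgap0
        have : 0 < M j * Λ i / C j := div_pos (mul_pos h0 (hΛ i)) (hC j)
        linarith
      · set x := m j i
        set y := M j * Λ i / C j with hy
        have hypos : 0 < y := div_pos (mul_pos h0 (hΛ i)) (hC j)
        have hlog : Real.log (x * C j / M j) - Real.log (Λ i) =
            Real.log x - Real.log y := by
          rw [hy, Real.log_div (mul_pos hx0 (hC j)).ne' h0.ne',
            Real.log_mul hx0.ne' (hC j).ne',
            Real.log_div (mul_pos h0 (hΛ i)).ne' (hC j).ne',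
            Real.log_mul h0.ne' (hΛ i).ne']
          ring
        have hgap0' : x * (Real.log x - Real.log y) - x + y = 0 := by
          have : gap j i = x * (Real.log x - Real.log y) - x + y := by
            simp only [hgap]; rw [hlog]
          rw [this] at hgap0; exact hgap0
        have hxy : x = y := aux_xlog_eq hx0 hypos (by linarith)
        show x * C j = M j * Λ i
        rw [hxy, hy]
        exact div_mul_cancel₀ _ (hC j).ne'

lemma entropy_term {c Cj T : ℝ} (hc : 0 ≤ c) (hCj : 0 < Cj) (hT : 0 < T) :
    c * Real.log (c * Cj / T) = c * (Real.log c + Real.log Cj - Real.log T) := by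
  rcases eq_or_lt_of_le hc with h | h
  · simp [← h]
  · rw [Real.log_div (mul_pos h hCj).ne' hT.ne', Real.log_mul h.ne' hCj.ne']

lemma obj_col_diff {J n : ℕ} (C : Fin J → ℝ) (mstar m' : Fin J → Fin n → ℝ) (j0 : Fin J)
    (hsame : ∀ j, j ≠ j0 → ∀ i, m' j i = mstar j i) :
    (∑ j, ∑ i, m' j i * Real.log (m' j i * C j / ∑ r, m' j r)) -
      (∑ j, ∑ i, mstar j i * Real.log (mstar j i * C j / ∑ r, mstar j r)) =
    (∑ i, m' j0 i * Real.log (m' j0 i * C j0 / ∑ r, m' j0 r)) -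
      (∑ i, mstar j0 i * Real.log (mstar j0 i * C j0 / ∑ r, mstar j0 r)) := by
  rw [← Finset.sum_sub_distrib]
  rw [Finset.sum_eq_single j0]
  · intro j _ hj
    have h1 : ∀ i, m' j i = mstar j i := hsame j hj
    have h2 : (∑ r, m' j r) = ∑ r, mstar j r := Finset.sum_congr rfl fun r _ => h1 r
    rw [h2]
    rw [show (∑ i, m' j i * Real.log (m' j i * C j / ∑ r, mstar j r))
        = ∑ i, mstar j i * Real.log (mstar j i * C j / ∑ r, mstar j r) from
      Finset.sum_congr rfl fun i _ => by rw [h1 i]]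
    ring
  · intro h; exact absurd (Finset.mem_univ j0) h

lemma gsum_diff {n : ℕ} (G : Fin n → ℝ → ℝ) (mbar mbar' : Fin n → ℝ) (s : Finset (Fin n))
    (hsame : ∀ i ∉ s, mbar' i = mbar i) :
    (∑ i, G i (mbar' i)) - (∑ i, G i (mbar i)) =
      ∑ i ∈ s, (G i (mbar' i) - G i (mbar i)) := by
  rw [← Finset.sum_sub_distrib]
  exact (Finset.sum_subset (Finset.subset_univ s)
    (fun i _ hi => by rw [hsame i hi]; ring)).symm

lemma interior_foc (J n : ℕ) (route : Fin n → Finset (Fin J))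
    (C : Fin J → ℝ) (hC : ∀ j, 0 < C j)
    (G : Fin n → ℝ → ℝ)
    (hGdiff : ∀ i, ∀ m ∈ Set.Ioi (0 : ℝ), DifferentiableAt ℝ (G i) m)
    (mstar : Fin J → Fin n → ℝ) (mbarstar : Fin n → ℝ)
    (hm : ∀ j i, 0 ≤ mstar j i) (hmz : ∀ j i, j ∉ route i → mstar j i = 0)
    (hmbar : ∀ i, 0 < mbarstar i)
    (hfeas : ∀ i, (∑ j ∈ route i, mstar j i) = mbarstar i)
    (hopt : ∀ (m : Fin J → Fin n → ℝ) (mbar : Fin n → ℝ),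
      (∀ j i, 0 ≤ m j i) → (∀ j i, j ∉ route i → m j i = 0) →
      (∀ i, 0 < mbar i) → (∀ i, (∑ j ∈ route i, m j i) = mbar i) →
      (∑ j, ∑ i, mstar j i * Real.log (mstar j i * C j / ∑ r, mstar j r)) -
          (∑ i, G i (mbarstar i)) ≤
        (∑ j, ∑ i, m j i * Real.log (m j i * C j / ∑ r, m j r)) -
          ∑ i, G i (mbar i))
    (j0 : Fin J) (i0 : Fin n) (hji : j0 ∈ route i0) (hx : 0 < mstar j0 i0) :
    Real.log (mstar j0 i0) + Real.log (C j0) - Real.log (∑ r, mstar j0 r)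
      = deriv (G i0) (mbarstar i0) := by
  set x := mstar j0 i0 with hxdef
  set M := ∑ r, mstar j0 r with hMdef
  set b := mbarstar i0 with hbdef
  have hxM : x ≤ M :=
    Finset.single_le_sum (f := fun r => mstar j0 r) (fun r _ => hm j0 r) (Finset.mem_univ i0)
  have hMpos : 0 < M := lt_of_lt_of_le hx hxM
  have hbpos : 0 < b := hmbar i0
  set δ : ℝ := min x b with hδdef
  have hδ : 0 < δ := lt_min hx hbpos
  set φ : ℝ → ℝ := fun t =>
    (x + t) * (Real.log (x + t) + Real.log (C j0) - Real.log (M + t)) +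
      (∑ i ∈ Finset.univ.erase i0,
        mstar j0 i * (Real.log (mstar j0 i) + Real.log (C j0) - Real.log (M + t))) -
      G i0 (b + t) with hφdef
  -- local minimality
  have hmono : ∀ t : ℝ, |t| < δ → φ 0 ≤ φ t := by
    intro t ht
    have htx : -x < t := by
      have := (abs_lt.mp ht).1
      have : -δ < t := this
      have hδx : δ ≤ x := min_le_left _ _
      linarith
    have htb : -b < t := by
      have := (abs_lt.mp ht).1
      have hδb : δ ≤ b := min_le_right _ _
      linarith
    have hxt : 0 < x + t := by linarith
    have hbt : 0 < b + t := by linarith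
    have hMt : 0 < M + t := by linarith
    set m' : Fin J → Fin n → ℝ := fun j i => if j = j0 ∧ i = i0 then x + t else mstar j i
      with hm'def
    set mbar' : Fin n → ℝ := fun i => if i = i0 then b + t else mbarstar i with hmbar'def
    have hm'nn : ∀ j i, 0 ≤ m' j i := by
      intro j i
      simp only [hm'def]
      split
      · exact hxt.le
      · exact hm j i
    have hm'z : ∀ j i, j ∉ route i → m' j i = 0 := by
      intro j i hj
      simp only [hm'def]
      split
      · rename_i h; exact absurd (h.1 ▸ h.2 ▸ hji) hj
      · exact hmz j i hj
    have hmbar'pos : ∀ i, 0 < mbar' i := by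
      intro i
      simp only [hmbar'def]
      split
      · exact hbt
      · exact hmbar i
    have hsum' : ∀ i, (∑ j ∈ route i, m' j i) = mbar' i := by
      intro i
      by_cases hi : i = i0
      · subst hi
        have hpt : ∀ j, m' j i = mstar j i + (if j = j0 then t else 0) := by
          intro j
          by_cases hj : j = j0
          · subst hj; simp [hm'def, hxdef]
          · simp [hm'def, hj]
        rw [Finset.sum_congr rfl (fun j _ => hpt j), Finset.sum_add_distrib,
          Finset.sum_ite_eq' (route i) j0 (fun _ => t), if_pos hji, hfeas i]
        simp [hmbar'def, hbdef]
      · have hpt : ∀ j, m' j i = mstar j i := by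
          intro j; simp [hm'def, hi]
        rw [Finset.sum_congr rfl (fun j _ => hpt j), hfeas i]
        simp [hmbar'def, hi]
    have hcol : (∑ r, m' j0 r) = M + t := by
      have hpt : ∀ r, m' j0 r = mstar j0 r + (if r = i0 then t else 0) := by
        intro r
        by_cases hr : r = i0
        · subst hr; simp [hm'def, hxdef]
        · simp [hm'def, hr]
      rw [Finset.sum_congr rfl (fun r _ => hpt r), Finset.sum_add_distrib,
        Finset.sum_ite_eq' Finset.univ i0 (fun _ => t), if_pos (Finset.mem_univ i0), ← hMdef]
    have hineq := hopt m' mbar' hm'nn hm'z hmbar'pos hsum'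
    -- compute the difference
    have hPdiff := obj_col_diff C mstar m' j0 (by
      intro j hj i
      simp [hm'def, hj])
    have hGdiffsum := gsum_diff G mbarstar mbar' {i0} (by
      intro i hi
      simp only [Finset.mem_singleton] at hi
      simp [hmbar'def, hi])
    have hinner' : (∑ i, m' j0 i * Real.log (m' j0 i * C j0 / ∑ r, m' j0 r)) =
        (x + t) * (Real.log (x + t) + Real.log (C j0) - Real.log (M + t)) +
        ∑ i ∈ Finset.univ.erase i0,
          mstar j0 i * (Real.log (mstar j0 i) + Real.log (C j0) - Real.log (M + t)) := by
      rw [hcol]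
      rw [← Finset.add_sum_erase Finset.univ
        (fun i => m' j0 i * Real.log (m' j0 i * C j0 / (M + t))) (Finset.mem_univ i0)]
      congr 1
      · have : m' j0 i0 = x + t := by simp [hm'def]
        rw [this, entropy_term hxt.le (hC j0) hMt]
      · apply Finset.sum_congr rfl
        intro i hi
        have hii0 : i ≠ i0 := (Finset.mem_erase.mp hi).1
        have : m' j0 i = mstar j0 i := by simp [hm'def, hii0]
        rw [this, entropy_term (hm j0 i) (hC j0) hMt]
    have hinner : (∑ i, mstar j0 i * Real.log (mstar j0 i * C j0 / ∑ r, mstar j0 r)) =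
        x * (Real.log x + Real.log (C j0) - Real.log M) +
        ∑ i ∈ Finset.univ.erase i0,
          mstar j0 i * (Real.log (mstar j0 i) + Real.log (C j0) - Real.log M) := by
      rw [← hMdef]
      rw [← Finset.add_sum_erase Finset.univ
        (fun i => mstar j0 i * Real.log (mstar j0 i * C j0 / M)) (Finset.mem_univ i0)]
      congr 1
      · rw [← hxdef, entropy_term hx.le (hC j0) hMpos]
      · exact Finset.sum_congr rfl fun i _ => entropy_term (hm j0 i) (hC j0) hMpos
    have hG' : (∑ i, G i (mbar' i)) - (∑ i, G i (mbarstar i)) = G i0 (b + t) - G i0 b := by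
      rw [hGdiffsum, Finset.sum_singleton]
      congr 2
      simp [hmbar'def]
    have hφt : φ t - φ 0 =
        ((∑ j, ∑ i, m' j i * Real.log (m' j i * C j / ∑ r, m' j r)) - ∑ i, G i (mbar' i)) -
        ((∑ j, ∑ i, mstar j i * Real.log (mstar j i * C j / ∑ r, mstar j r)) -
          ∑ i, G i (mbarstar i)) := by
      have e1 : φ t = (x + t) * (Real.log (x + t) + Real.log (C j0) - Real.log (M + t)) +
          (∑ i ∈ Finset.univ.erase i0,
            mstar j0 i * (Real.log (mstar j0 i) + Real.log (C j0) - Real.log (M + t))) -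
          G i0 (b + t) := rfl
      have e2 : φ 0 = x * (Real.log x + Real.log (C j0) - Real.log M) +
          (∑ i ∈ Finset.univ.erase i0,
            mstar j0 i * (Real.log (mstar j0 i) + Real.log (C j0) - Real.log M)) -
          G i0 b := by
        simp [hφdef]
      rw [e1, e2]
      have := hPdiff
      rw [hinner', hinner] at this
      linarith [hG']
    have h9 : 0 ≤ φ t - φ 0 := by rw [hφt]; linarith [hineq]
    linarith [h9]
  have hloc : IsLocalMin φ 0 := by
    have hball : Metric.ball (0:ℝ) δ ∈ nhds (0:ℝ) := Metric.ball_mem_nhds _ hδ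
    refine Filter.eventually_iff_exists_mem.mpr ⟨Metric.ball 0 δ, hball, ?_⟩
    intro t ht
    rw [Metric.mem_ball, Real.dist_eq, sub_zero] at ht
    exact hmono t ht
  -- derivative computation
  have hxt0 : HasDerivAt (fun t : ℝ => x + t) 1 0 := by
    simpa using (hasDerivAt_id (0:ℝ)).const_add x
  have hMt0 : HasDerivAt (fun t : ℝ => M + t) 1 0 := by
    simpa using (hasDerivAt_id (0:ℝ)).const_add M
  have hbt0 : HasDerivAt (fun t : ℝ => b + t) 1 0 := by
    simpa using (hasDerivAt_id (0:ℝ)).const_add b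
  have hlx : HasDerivAt (fun t : ℝ => Real.log (x + t)) (1 / (x + 0)) 0 :=
    hxt0.log (by simpa using hx.ne')
  have hlM : HasDerivAt (fun t : ℝ => Real.log (M + t)) (1 / (M + 0)) 0 :=
    hMt0.log (by simpa using hMpos.ne')
  have hterm1 : HasDerivAt
      (fun t : ℝ => (x + t) * (Real.log (x + t) + Real.log (C j0) - Real.log (M + t)))
      (1 * (Real.log (x + 0) + Real.log (C j0) - Real.log (M + 0)) +
        (x + 0) * (1 / (x + 0) - 1 / (M + 0))) 0 :=
    hxt0.mul ((hlx.add_const (Real.log (C j0))).sub hlM)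
  have hterm2 : HasDerivAt
      (fun t : ℝ => ∑ i ∈ Finset.univ.erase i0,
        mstar j0 i * (Real.log (mstar j0 i) + Real.log (C j0) - Real.log (M + t)))
      (∑ i ∈ Finset.univ.erase i0, mstar j0 i * (0 - 1 / (M + 0))) 0 :=
    HasDerivAt.fun_sum fun i _ =>
      ((hasDerivAt_const (0:ℝ) (Real.log (mstar j0 i) + Real.log (C j0))).sub hlM).const_mul
        (mstar j0 i)
  have hGb : HasDerivAt (G i0) (deriv (G i0) b) ((fun t : ℝ => b + t) 0) := by
    simpa using (hGdiff i0 b (Set.mem_Ioi.mpr hbpos)).hasDerivAt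
  have hterm3 : HasDerivAt (fun t : ℝ => G i0 (b + t)) (deriv (G i0) b * 1) 0 :=
    HasDerivAt.comp 0 hGb hbt0
  have hφder : HasDerivAt φ
      ((1 * (Real.log (x + 0) + Real.log (C j0) - Real.log (M + 0)) +
        (x + 0) * (1 / (x + 0) - 1 / (M + 0))) +
        (∑ i ∈ Finset.univ.erase i0, mstar j0 i * (0 - 1 / (M + 0))) -
        deriv (G i0) b * 1) 0 :=
    (hterm1.add hterm2).sub hterm3
  have hD0 := hφder.deriv
  rw [hloc.deriv_eq_zero] at hD0
  have hsumerase : (∑ i ∈ Finset.univ.erase i0, mstar j0 i) = M - x := by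
    have := Finset.add_sum_erase Finset.univ (fun i => mstar j0 i) (Finset.mem_univ i0)
    simp only [← hxdef, ← hMdef] at this
    linarith
  have hsum2 : (∑ i ∈ Finset.univ.erase i0, mstar j0 i * (0 - 1 / (M + 0))) =
      (M - x) * (0 - 1 / (M + 0)) := by
    rw [← Finset.sum_mul, hsumerase]
  rw [hsum2] at hD0
  simp only [add_zero] at hD0
  have e1 : x * (1 / x - 1 / M) = 1 - x / M := by field_simp
  have e2 : (M - x) * (0 - 1 / M) = -1 + x / M := by field_simp; ring
  rw [e1, e2] at hD0
  linarith [hD0]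

lemma chord_ineq {f : ℝ → ℝ} {b t : ℝ} (hf : ConcaveOn ℝ (Set.Ioi 0) f)
    (hb : 0 < b) (ht : 0 < t) (ht1 : t < 1) :
    (1 - t) * f b + t * f (b + 1) ≤ f (b + t) := by
  have := hf.2 (Set.mem_Ioi.mpr hb) (Set.mem_Ioi.mpr (by linarith : (0:ℝ) < b + 1))
    (by linarith : (0:ℝ) ≤ 1 - t) ht.le (by ring)
  simpa [smul_eq_mul, show (1 - t) * b + t * (b + 1) = b + t by ring] using this

lemma zero_entry (J n : ℕ) (route : Fin n → Finset (Fin J))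
    (C : Fin J → ℝ) (hC : ∀ j, 0 < C j)
    (G : Fin n → ℝ → ℝ)
    (hG : ∀ i, StrictConcaveOn ℝ (Set.Ioi 0) (G i))
    (mstar : Fin J → Fin n → ℝ) (mbarstar : Fin n → ℝ)
    (hm : ∀ j i, 0 ≤ mstar j i) (hmz : ∀ j i, j ∉ route i → mstar j i = 0)
    (hmbar : ∀ i, 0 < mbarstar i)
    (hfeas : ∀ i, (∑ j ∈ route i, mstar j i) = mbarstar i)
    (hopt : ∀ (m : Fin J → Fin n → ℝ) (mbar : Fin n → ℝ),
      (∀ j i, 0 ≤ m j i) → (∀ j i, j ∉ route i → m j i = 0) →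
      (∀ i, 0 < mbar i) → (∀ i, (∑ j ∈ route i, m j i) = mbar i) →
      (∑ j, ∑ i, mstar j i * Real.log (mstar j i * C j / ∑ r, mstar j r)) -
          (∑ i, G i (mbarstar i)) ≤
        (∑ j, ∑ i, m j i * Real.log (m j i * C j / ∑ r, m j r)) -
          ∑ i, G i (mbar i))
    (j0 : Fin J) (i0 : Fin n) (hji : j0 ∈ route i0) (hx0 : mstar j0 i0 = 0)
    (hM : 0 < ∑ r, mstar j0 r) : False := by
  set M := ∑ r, mstar j0 r with hMdef
  set b := mbarstar i0 with hbdef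
  have hbpos : 0 < b := hmbar i0
  set K : ℝ := G i0 b - G i0 (b + 1) with hKdef
  set B : ℝ := Real.log (C j0) - Real.log M + K with hBdef
  set t : ℝ := min (Real.exp (-B - 1)) (1/2) with htdef
  have ht0 : 0 < t := lt_min (Real.exp_pos _) (by norm_num)
  have ht1 : t < 1 := lt_of_le_of_lt (min_le_right _ _) (by norm_num)
  have htlog : Real.log t ≤ -B - 1 := by
    have h1 : Real.log t ≤ Real.log (Real.exp (-B - 1)) :=
      Real.log_le_log ht0 (min_le_left _ _)
    rwa [Real.log_exp] at h1
  -- competitor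
  set m' : Fin J → Fin n → ℝ := fun j i => if j = j0 ∧ i = i0 then t else mstar j i
    with hm'def
  set mbar' : Fin n → ℝ := fun i => if i = i0 then b + t else mbarstar i with hmbar'def
  have hm'nn : ∀ j i, 0 ≤ m' j i := by
    intro j i; simp only [hm'def]; split
    · exact ht0.le
    · exact hm j i
  have hm'z : ∀ j i, j ∉ route i → m' j i = 0 := by
    intro j i hj; simp only [hm'def]; split
    · rename_i h; exact absurd (h.1 ▸ h.2 ▸ hji) hj
    · exact hmz j i hj
  have hmbar'pos : ∀ i, 0 < mbar' i := by
    intro i; simp only [hmbar'def]; split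
    · linarith
    · exact hmbar i
  have hsum' : ∀ i, (∑ j ∈ route i, m' j i) = mbar' i := by
    intro i
    by_cases hi : i = i0
    · subst hi
      have hpt : ∀ j, m' j i = mstar j i + (if j = j0 then t else 0) := by
        intro j
        by_cases hj : j = j0
        · subst hj; simp [hm'def, hx0]
        · simp [hm'def, hj]
      rw [Finset.sum_congr rfl (fun j _ => hpt j), Finset.sum_add_distrib,
        Finset.sum_ite_eq' (route i) j0 (fun _ => t), if_pos hji, hfeas i]
      simp [hmbar'def, hbdef]
    · have hpt : ∀ j, m' j i = mstar j i := by intro j; simp [hm'def, hi]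
      rw [Finset.sum_congr rfl (fun j _ => hpt j), hfeas i]
      simp [hmbar'def, hi]
  have hcol : (∑ r, m' j0 r) = M + t := by
    have hpt : ∀ r, m' j0 r = mstar j0 r + (if r = i0 then t else 0) := by
      intro r
      by_cases hr : r = i0
      · subst hr; simp [hm'def, hx0]
      · simp [hm'def, hr]
    rw [Finset.sum_congr rfl (fun r _ => hpt r), Finset.sum_add_distrib,
      Finset.sum_ite_eq' Finset.univ i0 (fun _ => t), if_pos (Finset.mem_univ i0), ← hMdef]
  have hMt : 0 < M + t := by linarith
  have hineq := hopt m' mbar' hm'nn hm'z hmbar'pos hsum'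
  have hPdiff := obj_col_diff C mstar m' j0 (by intro j hj i; simp [hm'def, hj])
  have hGdiffsum := gsum_diff G mbarstar mbar' {i0} (by
    intro i hi
    simp only [Finset.mem_singleton] at hi
    simp [hmbar'def, hi])
  have hG' : (∑ i, G i (mbar' i)) - (∑ i, G i (mbarstar i)) = G i0 (b + t) - G i0 b := by
    rw [hGdiffsum, Finset.sum_singleton]
    congr 2
    simp [hmbar'def]
  have hinner' : (∑ i, m' j0 i * Real.log (m' j0 i * C j0 / ∑ r, m' j0 r)) =
      t * (Real.log t + Real.log (C j0) - Real.log (M + t)) +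
      ∑ i ∈ Finset.univ.erase i0,
        mstar j0 i * (Real.log (mstar j0 i) + Real.log (C j0) - Real.log (M + t)) := by
    rw [hcol]
    rw [← Finset.add_sum_erase Finset.univ
      (fun i => m' j0 i * Real.log (m' j0 i * C j0 / (M + t))) (Finset.mem_univ i0)]
    congr 1
    · have : m' j0 i0 = t := by simp [hm'def]
      rw [this, entropy_term ht0.le (hC j0) hMt]
    · apply Finset.sum_congr rfl
      intro i hi
      have hii0 : i ≠ i0 := (Finset.mem_erase.mp hi).1
      have : m' j0 i = mstar j0 i := by simp [hm'def, hii0]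
      rw [this, entropy_term (hm j0 i) (hC j0) hMt]
  have hinner : (∑ i, mstar j0 i * Real.log (mstar j0 i * C j0 / ∑ r, mstar j0 r)) =
      ∑ i ∈ Finset.univ.erase i0,
        mstar j0 i * (Real.log (mstar j0 i) + Real.log (C j0) - Real.log M) := by
    rw [← hMdef]
    rw [← Finset.add_sum_erase Finset.univ
      (fun i => mstar j0 i * Real.log (mstar j0 i * C j0 / M)) (Finset.mem_univ i0)]
    rw [show mstar j0 i0 * Real.log (mstar j0 i0 * C j0 / M) = 0 by rw [hx0]; ring]
    rw [zero_add]
    exact Finset.sum_congr rfl fun i _ => entropy_term (hm j0 i) (hC j0) hM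
  -- bounds
  have hlogM : Real.log M ≤ Real.log (M + t) := Real.log_le_log hM (by linarith)
  have hb1 : t * (Real.log t + Real.log (C j0) - Real.log (M + t)) ≤
      t * (Real.log t + Real.log (C j0) - Real.log M) :=
    mul_le_mul_of_nonneg_left (by linarith) ht0.le
  have hb2 : (∑ i ∈ Finset.univ.erase i0,
        mstar j0 i * (Real.log (mstar j0 i) + Real.log (C j0) - Real.log (M + t))) ≤
      ∑ i ∈ Finset.univ.erase i0,
        mstar j0 i * (Real.log (mstar j0 i) + Real.log (C j0) - Real.log M) := by
    apply Finset.sum_le_sum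
    intro i _
    exact mul_le_mul_of_nonneg_left (by linarith) (hm j0 i)
  have hb3 : G i0 b - t * K ≤ G i0 (b + t) := by
    have hch := chord_ineq (hG i0).concaveOn hbpos ht0 ht1
    have he : (1 - t) * G i0 b + t * G i0 (b + 1) = G i0 b - t * K := by
      simp only [hKdef]; ring
    linarith
  have hD1 : (∑ j, ∑ i, m' j i * Real.log (m' j i * C j / ∑ r, m' j r)) -
      (∑ j, ∑ i, mstar j i * Real.log (mstar j i * C j / ∑ r, mstar j r))
      ≤ t * (Real.log t + Real.log (C j0) - Real.log M) := by
    rw [hPdiff, hinner', hinner]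
    linarith
  have hfin : t * (Real.log t + Real.log (C j0) - Real.log M) + t * K ≤ -t := by
    have h9 : (Real.log t + Real.log (C j0) - Real.log M) + K ≤ -1 := by
      simp only [hBdef] at htlog; linarith
    have h10 : t * ((Real.log t + Real.log (C j0) - Real.log M) + K) ≤ t * (-1) :=
      mul_le_mul_of_nonneg_left h9 ht0.le
    nlinarith
  linarith [hineq, hD1, hG', hb3, hfin, ht0]

lemma unused_link (J n : ℕ) (route : Fin n → Finset (Fin J))
    (C : Fin J → ℝ) (hC : ∀ j, 0 < C j)
    (G : Fin n → ℝ → ℝ)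
    (hGdiff : ∀ i, ∀ m ∈ Set.Ioi (0 : ℝ), DifferentiableAt ℝ (G i) m)
    (mstar : Fin J → Fin n → ℝ) (mbarstar : Fin n → ℝ)
    (hm : ∀ j i, 0 ≤ mstar j i) (hmz : ∀ j i, j ∉ route i → mstar j i = 0)
    (hmbar : ∀ i, 0 < mbarstar i)
    (hfeas : ∀ i, (∑ j ∈ route i, mstar j i) = mbarstar i)
    (hopt : ∀ (m : Fin J → Fin n → ℝ) (mbar : Fin n → ℝ),
      (∀ j i, 0 ≤ m j i) → (∀ j i, j ∉ route i → m j i = 0) →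
      (∀ i, 0 < mbar i) → (∀ i, (∑ j ∈ route i, m j i) = mbar i) →
      (∑ j, ∑ i, mstar j i * Real.log (mstar j i * C j / ∑ r, mstar j r)) -
          (∑ i, G i (mbarstar i)) ≤
        (∑ j, ∑ i, m j i * Real.log (m j i * C j / ∑ r, m j r)) -
          ∑ i, G i (mbar i))
    (j0 : Fin J) (hM0 : (∑ r, mstar j0 r) = 0)
    (μ : Fin n → ℝ) (hμ : ∀ i, 0 < μ i)
    (hmud : ∀ i, Real.log (μ i) = deriv (G i) (mbarstar i)) :
    (∑ i ∈ Finset.univ.filter fun i => j0 ∈ route i, μ i) ≤ C j0 := by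
  by_cases hne : (Finset.univ.filter fun i => j0 ∈ route i).Nonempty
  swap
  · rw [Finset.not_nonempty_iff_eq_empty] at hne
    rw [hne, Finset.sum_empty]
    exact (hC j0).le
  set s := Finset.univ.filter fun i => j0 ∈ route i with hsdef
  set S := ∑ i ∈ s, μ i with hSdef
  have hS : 0 < S := Finset.sum_pos (fun i _ => hμ i) hne
  have hcol0 : ∀ i, mstar j0 i = 0 := by
    intro i
    exact (Finset.sum_eq_zero_iff_of_nonneg (fun r _ => hm j0 r)).mp hM0 i (Finset.mem_univ i)
  set A : ℝ := ∑ i ∈ s, μ i * (Real.log (μ i) + Real.log (C j0) - Real.log S) with hAdef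
  set φ : ℝ → ℝ := fun t => t * A - ∑ i ∈ s, G i (mbarstar i + t * μ i) with hφdef
  -- derivative
  have hφder : HasDerivAt φ (A - ∑ i ∈ s, deriv (G i) (mbarstar i) * μ i) 0 := by
    have h1 : HasDerivAt (fun t : ℝ => t * A) A 0 := by
      simpa using (hasDerivAt_id (0:ℝ)).mul_const A
    have h2 : HasDerivAt (fun t : ℝ => ∑ i ∈ s, G i (mbarstar i + t * μ i))
        (∑ i ∈ s, deriv (G i) (mbarstar i) * μ i) 0 := by
      apply HasDerivAt.fun_sum
      intro i _
      have haff : HasDerivAt (fun t : ℝ => mbarstar i + t * μ i) (μ i) 0 := by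
        simpa using ((hasDerivAt_id (0:ℝ)).mul_const (μ i)).const_add (mbarstar i)
      have hGi : HasDerivAt (G i) (deriv (G i) (mbarstar i))
          ((fun t : ℝ => mbarstar i + t * μ i) 0) := by
        simpa using (hGdiff i (mbarstar i) (Set.mem_Ioi.mpr (hmbar i))).hasDerivAt
      have := HasDerivAt.comp 0 hGi haff
      exact this
    exact h1.sub h2
  -- right local minimality
  have hev : ∀ᶠ t in nhdsWithin 0 (Set.Ioi 0), φ 0 ≤ φ t := by
    filter_upwards [self_mem_nhdsWithin] with t ht
    have ht0 : 0 < t := ht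
    set m' : Fin J → Fin n → ℝ := fun j i => if j = j0 ∧ j0 ∈ route i then t * μ i
      else mstar j i with hm'def
    set mbar' : Fin n → ℝ := fun i => if j0 ∈ route i then mbarstar i + t * μ i
      else mbarstar i with hmbar'def
    have hm'nn : ∀ j i, 0 ≤ m' j i := by
      intro j i; simp only [hm'def]; split
      · exact (mul_pos ht0 (hμ i)).le
      · exact hm j i
    have hm'z : ∀ j i, j ∉ route i → m' j i = 0 := by
      intro j i hj; simp only [hm'def]; split
      · rename_i h; exact absurd (h.1 ▸ h.2) hj
      · exact hmz j i hj
    have hmbar'pos : ∀ i, 0 < mbar' i := by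
      intro i; simp only [hmbar'def]; split
      · have h1 := mul_pos ht0 (hμ i); linarith [hmbar i]
      · exact hmbar i
    have hsum' : ∀ i, (∑ j ∈ route i, m' j i) = mbar' i := by
      intro i
      by_cases hP : j0 ∈ route i
      · have hpt : ∀ j, m' j i = mstar j i + (if j = j0 then t * μ i else 0) := by
          intro j
          by_cases hj : j = j0
          · subst hj; simp [hm'def, hP, hcol0 i]
          · simp [hm'def, hj]
        rw [Finset.sum_congr rfl (fun j _ => hpt j), Finset.sum_add_distrib,
          Finset.sum_ite_eq' (route i) j0 (fun _ => t * μ i), if_pos hP, hfeas i]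
        simp [hmbar'def, hP]
      · have hpt : ∀ j, m' j i = mstar j i := by
          intro j; simp only [hm'def]; split
          · rename_i h; exact absurd (h.1 ▸ h.2) (h.1 ▸ hP)
          · rfl
        rw [Finset.sum_congr rfl (fun j _ => hpt j), hfeas i]
        simp [hmbar'def, hP]
    have hineq := hopt m' mbar' hm'nn hm'z hmbar'pos hsum'
    have hPdiff := obj_col_diff C mstar m' j0 (by intro j hj i; simp [hm'def, hj])
    have hcol' : (∑ r, m' j0 r) = t * S := by
      have hpt : ∀ r, m' j0 r = if j0 ∈ route r then t * μ r else 0 := by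
        intro r
        by_cases hr : j0 ∈ route r
        · simp [hm'def, hr]
        · simp [hm'def, hr, hcol0 r]
      rw [Finset.sum_congr rfl (fun r _ => hpt r), ← Finset.sum_filter, ← hsdef,
        ← Finset.mul_sum, ← hSdef]
    have htS : 0 < t * S := mul_pos ht0 hS
    have hinner' : (∑ i, m' j0 i * Real.log (m' j0 i * C j0 / ∑ r, m' j0 r)) = t * A := by
      rw [hcol']
      have hpt : ∀ i, m' j0 i * Real.log (m' j0 i * C j0 / (t * S)) =
          if j0 ∈ route i then
            t * (μ i * (Real.log (μ i) + Real.log (C j0) - Real.log S)) else 0 := by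
        intro i
        by_cases hr : j0 ∈ route i
        · have h1 : m' j0 i = t * μ i := by simp [hm'def, hr]
          rw [h1, if_pos hr]
          have h2 : t * μ i * C j0 / (t * S) = μ i * C j0 / S := by
            field_simp
          rw [h2]
          have h3 := entropy_term (hμ i).le (hC j0) hS
          calc t * μ i * Real.log (μ i * C j0 / S)
              = t * (μ i * Real.log (μ i * C j0 / S)) := by ring
            _ = t * (μ i * (Real.log (μ i) + Real.log (C j0) - Real.log S)) := by rw [h3]
        · have h1 : m' j0 i = 0 := by simp [hm'def, hr, hcol0 i]
          rw [h1, if_neg hr]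
          ring
      rw [Finset.sum_congr rfl (fun i _ => hpt i), ← Finset.sum_filter, ← hsdef,
        ← Finset.mul_sum, hAdef]
    have hinner : (∑ i, mstar j0 i * Real.log (mstar j0 i * C j0 / ∑ r, mstar j0 r)) = 0 :=
      Finset.sum_eq_zero fun i _ => by rw [hcol0 i]; ring
    have hGdiffsum := gsum_diff G mbarstar mbar' s (by
      intro i hi
      have : j0 ∉ route i := by
        intro hc
        exact hi (by simp [hsdef, hc])
      simp [hmbar'def, this])
    have hGsum : (∑ i, G i (mbar' i)) - (∑ i, G i (mbarstar i)) =
        ∑ i ∈ s, (G i (mbarstar i + t * μ i) - G i (mbarstar i)) := by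
      rw [hGdiffsum]
      apply Finset.sum_congr rfl
      intro i hi
      have hP : j0 ∈ route i := (Finset.mem_filter.mp hi).2
      simp [hmbar'def, hP]
    -- φ t - φ 0 equals the objective difference
    have hφt : φ t - φ 0 =
        ((∑ j, ∑ i, m' j i * Real.log (m' j i * C j / ∑ r, m' j r)) - ∑ i, G i (mbar' i)) -
        ((∑ j, ∑ i, mstar j i * Real.log (mstar j i * C j / ∑ r, mstar j r)) -
          ∑ i, G i (mbarstar i)) := by
      have e0 : φ 0 = - ∑ i ∈ s, G i (mbarstar i) := by
        simp [hφdef]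
      have e1 : φ t = t * A - ∑ i ∈ s, G i (mbarstar i + t * μ i) := rfl
      have e2 : (∑ j, ∑ i, m' j i * Real.log (m' j i * C j / ∑ r, m' j r)) -
          (∑ j, ∑ i, mstar j i * Real.log (mstar j i * C j / ∑ r, mstar j r)) = t * A := by
        rw [hPdiff, hinner', hinner]; ring
      rw [e0, e1]
      rw [Finset.sum_sub_distrib] at hGsum
      linarith [hGsum, e2]
    have h9 : 0 ≤ φ t - φ 0 := by rw [hφt]; linarith [hineq]
    linarith [h9]
  have hD := right_deriv_nonneg hφder hev
  have hDS : A - (∑ i ∈ s, deriv (G i) (mbarstar i) * μ i) =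
      (Real.log (C j0) - Real.log S) * S := by
    rw [hAdef, ← Finset.sum_sub_distrib]
    rw [show ∑ i ∈ s, (μ i * (Real.log (μ i) + Real.log (C j0) - Real.log S) -
        deriv (G i) (mbarstar i) * μ i) =
      ∑ i ∈ s, (Real.log (C j0) - Real.log S) * μ i from
        Finset.sum_congr rfl fun i _ => by rw [← hmud i]; ring]
    rw [← Finset.mul_sum, ← hSdef]
  rw [hDS] at hD
  have hlogle : Real.log S ≤ Real.log (C j0) := by
    by_contra hcon
    push_neg at hcon
    nlinarith
  calc S = Real.exp (Real.log S) := (Real.exp_log hS).symm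
    _ ≤ Real.exp (Real.log (C j0)) := Real.exp_le_exp.mpr hlogle
    _ = C j0 := Real.exp_log (hC j0)

lemma isleast_dual {g : ℝ → ℝ} (hg : ConcaveOn ℝ (Set.Ioi 0) g) {x : ℝ} (hx : 0 < x)
    (hd : DifferentiableAt ℝ g x) :
    IsLeast {z : ℝ | ∃ m : ℝ, 0 < m ∧ z = (deriv g x) * m - g m} (deriv g x * x - g x) := by
  constructor
  · exact ⟨x, hx, rfl⟩
  · rintro z ⟨m, hm, rfl⟩
    have := grad_ineq hg hx hm hd
    nlinarith


/-- Optimality conditions for the primal-dual pair: `(m*, m̄*)` is primal optimal and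
`Λ*` is dual optimal if and only if `Σ_{j∈i} m*_{ji} = m̄*_i` for all `i`,
`Σ_{i:j∈i} Λ*_i ≤ C_j` for all `j`, `m*_j·Λ*_i = m*_{ji}·C_j` for all `(j,i) ∈ 𝒦`,
and `exp(G_i'(m̄*_i)) = Λ*_i` for all `i`. -/
theorem stmt17 (J n : ℕ) (route : Fin n → Finset (Fin J))
    (hroute : ∀ i, (route i).Nonempty)
    (C : Fin J → ℝ) (hC : ∀ j, 0 < C j)
    (U G : Fin n → ℝ → ℝ)
    (hG : ∀ i, StrictConcaveOn ℝ (Set.Ioi 0) (G i))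
    (hGdiff : ∀ i, ∀ m ∈ Set.Ioi (0 : ℝ), DifferentiableAt ℝ (G i) m)
    (hGsurj : ∀ i, ∀ y : ℝ, ∃ m > (0 : ℝ), deriv (G i) m = y)
    (hU : ∀ i (lam : ℝ),
      IsLeast {x : ℝ | ∃ m : ℝ, 0 < m ∧ x = lam * m - G i m} (U i (Real.exp lam)))
    (mstar : Fin J → Fin n → ℝ) (mbarstar Λstar : Fin n → ℝ)
    (hm : ∀ j i, 0 ≤ mstar j i) (hmz : ∀ j i, j ∉ route i → mstar j i = 0)
    (hmbar : ∀ i, 0 < mbarstar i) (hΛpos : ∀ i, 0 < Λstar i) :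
    (((∀ i, (∑ j ∈ route i, mstar j i) = mbarstar i) ∧
        ∀ (m : Fin J → Fin n → ℝ) (mbar : Fin n → ℝ),
          (∀ j i, 0 ≤ m j i) → (∀ j i, j ∉ route i → m j i = 0) →
          (∀ i, 0 < mbar i) → (∀ i, (∑ j ∈ route i, m j i) = mbar i) →
          (∑ j, ∑ i, mstar j i * Real.log (mstar j i * C j / ∑ r, mstar j r)) -
              (∑ i, G i (mbarstar i)) ≤
            (∑ j, ∑ i, m j i * Real.log (m j i * C j / ∑ r, m j r)) -
              ∑ i, G i (mbar i)) ∧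
      ((∀ j, (∑ i ∈ Finset.univ.filter fun i => j ∈ route i, Λstar i) ≤ C j) ∧
        ∀ Λ : Fin n → ℝ, (∀ i, 0 < Λ i) →
          (∀ j, (∑ i ∈ Finset.univ.filter fun i => j ∈ route i, Λ i) ≤ C j) →
          (∑ i, U i (Λ i)) ≤ ∑ i, U i (Λstar i))) ↔
    ((∀ i, (∑ j ∈ route i, mstar j i) = mbarstar i) ∧
      (∀ j, (∑ i ∈ Finset.univ.filter fun i => j ∈ route i, Λstar i) ≤ C j) ∧
      (∀ j i, j ∈ route i → (∑ r, mstar j r) * Λstar i = mstar j i * C j) ∧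
      (∀ i, Real.exp (deriv (G i) (mbarstar i)) = Λstar i)) := by
  -- helper: splitting an objective sum along a dual vector
  have hsplitgen : ∀ (m : Fin J → Fin n → ℝ), (∀ j i, j ∉ route i → m j i = 0) →
      ∀ (Λ' : Fin n → ℝ) (mb : Fin n → ℝ), (∀ i, (∑ j ∈ route i, m j i) = mb i) →
      (∑ j, ∑ i, m j i * Real.log (m j i * C j / ∑ r, m j r)) =
        (∑ j, ∑ i, m j i * (Real.log (m j i * C j / ∑ r, m j r) - Real.log (Λ' i)))
        + ∑ i, Real.log (Λ' i) * mb i := by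
    intro m hz Λ' mb hfe
    have e : ∀ j, (∑ i, m j i * Real.log (m j i * C j / ∑ r, m j r)) =
        (∑ i, m j i * (Real.log (m j i * C j / ∑ r, m j r) - Real.log (Λ' i))) +
        ∑ i, m j i * Real.log (Λ' i) := by
      intro j
      rw [← Finset.sum_add_distrib]
      exact Finset.sum_congr rfl fun i _ => by ring
    rw [Finset.sum_congr rfl (fun j _ => e j), Finset.sum_add_distrib]
    congr 1
    rw [Finset.sum_comm]
    refine Finset.sum_congr rfl fun i _ => ?_
    rw [← Finset.sum_mul]
    rw [show (∑ j, m j i) = mb i from by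
      rw [← hfe i]
      exact (Finset.sum_subset (Finset.subset_univ _) (fun j _ hj => hz j i hj)).symm]
    ring
  constructor
  · rintro ⟨⟨hfeas, hpopt⟩, hdfeas, hdopt⟩
    set lam : Fin n → ℝ := fun i => deriv (G i) (mbarstar i) with hlamdef
    set μ : Fin n → ℝ := fun i => Real.exp (lam i) with hμdef
    have hμpos : ∀ i, 0 < μ i := fun i => Real.exp_pos _
    have hμlog : ∀ i, Real.log (μ i) = lam i := fun i => Real.log_exp _
    have huniv : ∀ i, (∑ j, mstar j i) = mbarstar i := by
      intro i
      rw [← hfeas i]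
      exact (Finset.sum_subset (Finset.subset_univ _) (fun j _ hj => hmz j i hj)).symm
    have hposA : ∀ j i, j ∈ route i → 0 < (∑ r, mstar j r) → 0 < mstar j i := by
      intro j i hji hMj
      rcases eq_or_lt_of_le (hm j i) with h | h
      · exact (zero_entry J n route C hC G hG mstar mbarstar hm hmz hmbar hfeas hpopt
          j i hji h.symm hMj).elim
      · exact h
    have hfoc : ∀ j i, j ∈ route i → 0 < mstar j i →
        Real.log (mstar j i) + Real.log (C j) - Real.log (∑ r, mstar j r) = lam i :=
      fun j i hji hx => interior_foc J n route C hC G hGdiff mstar mbarstar hm hmz hmbar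
        hfeas hpopt j i hji hx
    have hexistspos : ∀ i, ∃ j, j ∈ route i ∧ 0 < mstar j i := by
      intro i
      by_contra hcon
      push_neg at hcon
      have hz : (∑ j ∈ route i, mstar j i) = 0 :=
        Finset.sum_eq_zero fun j hj => le_antisymm (hcon j hj) (hm j i)
      rw [hfeas i] at hz
      exact absurd hz (hmbar i).ne'
    have hμcomp : ∀ j i, j ∈ route i → 0 < mstar j i →
        mstar j i * C j = (∑ r, mstar j r) * μ i := by
      intro j i hji hx
      have hM : 0 < ∑ r, mstar j r :=
        lt_of_lt_of_le hx (Finset.single_le_sum (fun r _ => hm j r) (Finset.mem_univ i))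
      have h1 := hfoc j i hji hx
      have h2 : μ i = Real.exp (Real.log (mstar j i) + Real.log (C j) -
          Real.log (∑ r, mstar j r)) := by rw [hμdef]; rw [h1]
      rw [Real.exp_sub, Real.exp_add, Real.exp_log hx, Real.exp_log (hC j),
        Real.exp_log hM] at h2
      rw [h2]
      field_simp
    have hμfeas : ∀ j, (∑ i ∈ Finset.univ.filter fun i => j ∈ route i, μ i) ≤ C j := by
      intro j
      rcases eq_or_lt_of_le (Finset.sum_nonneg (fun r (_ : r ∈ Finset.univ) => hm j r) :
          (0:ℝ) ≤ ∑ r, mstar j r) with hMj | hMj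
      · exact unused_link J n route C hC G hGdiff mstar mbarstar hm hmz hmbar hfeas hpopt
          j hMj.symm μ hμpos (fun i => hμlog i)
      · have hall : ∀ i ∈ Finset.univ.filter (fun i => j ∈ route i),
            μ i = mstar j i * C j / (∑ r, mstar j r) := by
          intro i hi
          have hji := (Finset.mem_filter.mp hi).2
          have hx := hposA j i hji hMj
          have h1 := hμcomp j i hji hx
          rw [eq_div_iff hMj.ne']
          linarith [h1]
        rw [Finset.sum_congr rfl hall]
        have h6 : (∑ i ∈ Finset.univ.filter (fun i => j ∈ route i),
            mstar j i * C j / (∑ r, mstar j r)) =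
            (∑ i ∈ Finset.univ.filter (fun i => j ∈ route i), mstar j i) * C j /
              (∑ r, mstar j r) := by
          rw [← Finset.sum_div, ← Finset.sum_mul]
        have h7 : (∑ i ∈ Finset.univ.filter (fun i => j ∈ route i), mstar j i) =
            ∑ r, mstar j r :=
          Finset.sum_filter_of_ne (fun i _ hne => by
            by_contra hc
            exact hne (hmz j i hc))
        rw [h6, h7, mul_comm, mul_div_assoc, div_self hMj.ne', mul_one]
    have hkeyE : ∀ j i, mstar j i * Real.log (mstar j i * C j / ∑ r, mstar j r) =
        mstar j i * lam i := by
      intro j i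
      by_cases hji : j ∈ route i
      · rcases eq_or_lt_of_le (hm j i) with h | h
        · rw [← h]; ring
        · have hM : 0 < ∑ r, mstar j r :=
            lt_of_lt_of_le h (Finset.single_le_sum (fun r _ => hm j r) (Finset.mem_univ i))
          rw [entropy_term h.le (hC j) hM, hfoc j i hji h]
      · rw [hmz j i hji]; ring
    have hPstar : (∑ j, ∑ i, mstar j i * Real.log (mstar j i * C j / ∑ r, mstar j r)) =
        ∑ i, lam i * mbarstar i := by
      rw [Finset.sum_congr rfl (fun j (_ : j ∈ Finset.univ) =>
        Finset.sum_congr rfl (fun i _ => hkeyE j i))]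
      rw [Finset.sum_comm]
      refine Finset.sum_congr rfl fun i _ => ?_
      rw [← Finset.sum_mul, huniv i]
      ring
    have hUval : ∀ i, U i (μ i) = lam i * mbarstar i - G i (mbarstar i) := by
      intro i
      have h2 := isleast_dual (hG i).concaveOn (hmbar i)
        (hGdiff i _ (Set.mem_Ioi.mpr (hmbar i)))
      exact (hU i (lam i)).unique h2
    have hUB : ∀ i, U i (Λstar i) ≤ Real.log (Λstar i) * mbarstar i - G i (mbarstar i) := by
      intro i
      have h1 := (hU i (Real.log (Λstar i))).2 ⟨mbarstar i, hmbar i, rfl⟩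
      rwa [Real.exp_log (hΛpos i)] at h1
    obtain ⟨hTnn, hTeq⟩ := relent_main J n route C hC mstar hm hmz Λstar hΛpos hdfeas
    have hdual := hdopt μ hμpos hμfeas
    have hsumUμ : (∑ i, U i (μ i)) =
        (∑ i, lam i * mbarstar i) - ∑ i, G i (mbarstar i) := by
      rw [Finset.sum_congr rfl (fun i (_ : i ∈ Finset.univ) => hUval i),
        Finset.sum_sub_distrib]
    have hsplit := hsplitgen mstar hmz Λstar mbarstar hfeas
    have hchain1 : (∑ i, U i (Λstar i)) ≤
        (∑ i, Real.log (Λstar i) * mbarstar i) - ∑ i, G i (mbarstar i) := by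
      have h1 := Finset.sum_le_sum (fun i (_ : i ∈ Finset.univ) => hUB i)
      rwa [Finset.sum_sub_distrib] at h1
    have hT0 : (∑ j, ∑ i, mstar j i *
        (Real.log (mstar j i * C j / ∑ r, mstar j r) - Real.log (Λstar i))) ≤ 0 := by
      linarith [hdual, hchain1, hsumUμ, hPstar, hsplit]
    have hcomp := hTeq hT0
    refine ⟨hfeas, hdfeas, fun j i hji => (hcomp j i hji).symm, ?_⟩
    intro i
    obtain ⟨j, hji, hx⟩ := hexistspos i
    have hM : 0 < ∑ r, mstar j r :=
      lt_of_lt_of_le hx (Finset.single_le_sum (fun r _ => hm j r) (Finset.mem_univ i))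
    have h1 := hcomp j i hji
    have h2 := hμcomp j i hji hx
    have h4 : Λstar i = μ i :=
      mul_left_cancel₀ hM.ne' (by linarith : (∑ r, mstar j r) * Λstar i =
        (∑ r, mstar j r) * μ i)
    exact h4.symm
  · rintro ⟨hfeas, hdfeas, hcomp, hexp⟩
    have hlog : ∀ i, Real.log (Λstar i) = deriv (G i) (mbarstar i) := by
      intro i
      rw [← hexp i, Real.log_exp]
    have hkeyA : ∀ j i, mstar j i * Real.log (mstar j i * C j / ∑ r, mstar j r) =
        mstar j i * Real.log (Λstar i) := by
      intro j i
      by_cases hji : j ∈ route i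
      · rcases eq_or_lt_of_le (hm j i) with h | h
        · rw [← h]; ring
        · have hM : 0 < ∑ r, mstar j r :=
            lt_of_lt_of_le h (Finset.single_le_sum (fun r _ => hm j r) (Finset.mem_univ i))
          have h1 := hcomp j i hji
          have h2 : mstar j i * C j / (∑ r, mstar j r) = Λstar i := by
            rw [← h1, mul_comm, mul_div_assoc, div_self hM.ne', mul_one]
          rw [h2]
      · rw [hmz j i hji]; ring
    have hPstar : (∑ j, ∑ i, mstar j i * Real.log (mstar j i * C j / ∑ r, mstar j r)) =
        ∑ i, Real.log (Λstar i) * mbarstar i := by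
      rw [Finset.sum_congr rfl (fun j (_ : j ∈ Finset.univ) =>
        Finset.sum_congr rfl (fun i _ => hkeyA j i))]
      rw [Finset.sum_comm]
      refine Finset.sum_congr rfl fun i _ => ?_
      rw [← Finset.sum_mul]
      rw [show (∑ j, mstar j i) = mbarstar i from by
        rw [← hfeas i]
        exact (Finset.sum_subset (Finset.subset_univ _) (fun j _ hj => hmz j i hj)).symm]
      ring
    refine ⟨⟨hfeas, ?_⟩, hdfeas, ?_⟩
    · -- primal optimality
      intro m mbar hm1 hm2 hm3 hm4
      obtain ⟨hTnn, -⟩ := relent_main J n route C hC m hm1 hm2 Λstar hΛpos hdfeas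
      have hsplit := hsplitgen m hm2 Λstar mbar hm4
      have hGb : ∀ i, G i (mbar i) ≤ G i (mbarstar i) +
          Real.log (Λstar i) * (mbar i - mbarstar i) := by
        intro i
        have h1 := grad_ineq (hG i).concaveOn (hmbar i) (hm3 i)
          (hGdiff i _ (Set.mem_Ioi.mpr (hmbar i)))
        rw [← hlog i] at h1
        exact h1
      have hGsum := Finset.sum_le_sum (fun i (_ : i ∈ Finset.univ) => hGb i)
      rw [Finset.sum_add_distrib] at hGsum
      have hexp2 : (∑ i, Real.log (Λstar i) * (mbar i - mbarstar i)) =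
          (∑ i, Real.log (Λstar i) * mbar i) - ∑ i, Real.log (Λstar i) * mbarstar i := by
        rw [← Finset.sum_sub_distrib]
        exact Finset.sum_congr rfl fun i _ => by ring
      rw [hexp2] at hGsum
      rw [hPstar, hsplit]
      linarith [hTnn, hGsum]
    · -- dual optimality
      intro Λ hΛp hΛf
      obtain ⟨hTnn, -⟩ := relent_main J n route C hC mstar hm hmz Λ hΛp hΛf
      have hUB : ∀ i, U i (Λ i) ≤ Real.log (Λ i) * mbarstar i - G i (mbarstar i) := by
        intro i
        have h1 := (hU i (Real.log (Λ i))).2 ⟨mbarstar i, hmbar i, rfl⟩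
        rwa [Real.exp_log (hΛp i)] at h1
      have hUval : ∀ i, U i (Λstar i) =
          Real.log (Λstar i) * mbarstar i - G i (mbarstar i) := by
        intro i
        have h2 := isleast_dual (hG i).concaveOn (hmbar i)
          (hGdiff i _ (Set.mem_Ioi.mpr (hmbar i)))
        have h3 := (hU i (deriv (G i) (mbarstar i))).unique h2
        rw [hexp i] at h3
        rw [h3, hlog i]
      have hsplit2 := hsplitgen mstar hmz Λ mbarstar hfeas
      have hA : (∑ i, U i (Λ i)) ≤
          (∑ i, Real.log (Λ i) * mbarstar i) - ∑ i, G i (mbarstar i) := by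
        have h1 := Finset.sum_le_sum (fun i (_ : i ∈ Finset.univ) => hUB i)
        rwa [Finset.sum_sub_distrib] at h1
      have hB : (∑ i, U i (Λstar i)) =
          (∑ i, Real.log (Λstar i) * mbarstar i) - ∑ i, G i (mbarstar i) := by
        rw [Finset.sum_congr rfl (fun i (_ : i ∈ Finset.univ) => hUval i),
          Finset.sum_sub_distrib]
      linarith [hA, hB, hTnn, hsplit2, hPstar]
end
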